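/- arXiv:1908.03045 — 4 statements merged into one kernel-verified Lean document; each statement's English description precedes it below -/
import Mathlib

section
/- A set system 𝓕 ⊆ 2^[n] is shattering-extremal if and only if there exists a collection of pairs H ⊆ S ⊆ [n] such that the corresponding polynomials f_{S,H}, together with the polynomials x_i^2 − x_i for i ∈ [n], form a universal Gröbner basis of the vanishing ideal I(𝓕) ⊴ 𝔽[x_1,…,x_n]. -/
open MvPolynomial

/-- Monomials of `𝔽[x_1,…,x_n]` identified with their exponent vectors. -/
abbrev Mon (n : ℕ) := Fin n →₀ ℕ

/-- A linear order on monomials is a term order if `1` (i.e. the zero exponent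
vector) is minimal and the order is compatible with multiplication by monomials. -/
def IsTermOrder {n : ℕ} (lin : LinearOrder (Mon n)) : Prop :=
  (∀ u : Mon n, lin.le 0 u) ∧
    ∀ u v w : Mon n, lin.le u v → lin.le (u + w) (v + w)

/-- The strict lexicographic comparison of exponent vectors induced by the variable
ordering `x_{σ 0} ≻ x_{σ 1} ≻ ⋯ ≻ x_{σ (n-1)}`. -/
def lexLt {n : ℕ} (σ : Equiv.Perm (Fin n)) (u v : Mon n) : Prop :=
  ∃ j : Fin n, u (σ j) < v (σ j) ∧ ∀ i : Fin n, i < j → u (σ i) = v (σ i)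

/-- `lin` is the lexicographic term order induced by the variable ordering
`x_{σ 0} ≻ x_{σ 1} ≻ ⋯ ≻ x_{σ (n-1)}`. -/
def IsLexOrder {n : ℕ} (σ : Equiv.Perm (Fin n)) (lin : LinearOrder (Mon n)) : Prop :=
  ∀ u v : Mon n, lin.lt u v ↔ lexLt σ u v

/-- `m` is the leading monomial of `f` with respect to the monomial order `lin`. -/
def IsLeadMon {n : ℕ} {F : Type*} [CommSemiring F] (lin : LinearOrder (Mon n))
    (f : MvPolynomial (Fin n) F) (m : Mon n) : Prop :=
  m ∈ f.support ∧ ∀ m' ∈ f.support, lin.le m' m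

/-- The set of standard monomials of an ideal `I` with respect to the monomial
order `lin`: monomials that are not the leading monomial of any nonzero `f ∈ I`. -/
def stdMon {n : ℕ} {F : Type*} [CommSemiring F] (lin : LinearOrder (Mon n))
    (I : Ideal (MvPolynomial (Fin n) F)) : Set (Mon n) :=
  { m | ¬ ∃ f ∈ I, f ≠ 0 ∧ IsLeadMon lin f m }

/-- The vanishing ideal of a point set `V ⊆ F^n`. -/
def vanishIdeal {n : ℕ} {F : Type*} [CommRing F] (V : Set (Fin n → F)) :
    Ideal (MvPolynomial (Fin n) F) where
  carrier := { f | ∀ v ∈ V, MvPolynomial.eval v f = 0 }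
  add_mem' := by
    intro a b ha hb v hv
    simp [map_add, ha v hv, hb v hv]
  zero_mem' := by intro v hv; simp
  smul_mem' := by
    intro c f hf v hv
    simp [smul_eq_mul, hf v hv]

/-- A finite point set (in `{0,…,k-1}^n`, over any field) is extremal if its vanishing
ideal has the same standard monomials for every lexicographic term order. -/
def IsExtremal {n : ℕ} {F : Type*} [CommRing F] (V : Set (Fin n → F)) : Prop :=
  ∀ (σ₁ σ₂ : Equiv.Perm (Fin n)) (lin₁ lin₂ : LinearOrder (Mon n)),
    IsLexOrder σ₁ lin₁ → IsLexOrder σ₂ lin₂ →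
      stdMon lin₁ (vanishIdeal V) = stdMon lin₂ (vanishIdeal V)

/-- Embedding of a point of `{0,…,k-1}^n` into `F^n`. -/
def toField {n k : ℕ} (F : Type*) [Field F] (w : Fin n → Fin k) : Fin n → F :=
  fun i => ((w i : ℕ) : F)

/-- Identification of a point of `{0,…,k-1}^n` with an exponent vector in `ℕ^n`. -/
noncomputable def toExp {n k : ℕ} (w : Fin n → Fin k) : Mon n :=
  Finsupp.equivFunOnFinite.symm fun i => (w i : ℕ)

/-- The downshift `D_i(V)` of `V ⊆ {0,…,k-1}^n` at coordinate `i`: its `i`-section at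
each choice of the other coordinates is `{0,1,…,m-1}` where `m` is the size of the
corresponding `i`-section of `V`. -/
def downshift {n k : ℕ} (V : Finset (Fin n → Fin k)) (i : Fin n) :
    Finset (Fin n → Fin k) :=
  Finset.univ.filter fun w =>
    (w i : ℕ) < (Finset.univ.filter fun α : Fin k => Function.update w i α ∈ V).card

/-- The iterated downshift `D_{σ(n-1)}(D_{σ(n-2)}(⋯(D_{σ 0}(V))))`,
i.e. downshifts are applied at coordinates `σ 0, σ 1, …, σ (n-1)` in this order. -/
def iterDownshift {n k : ℕ} (σ : Equiv.Perm (Fin n)) (V : Finset (Fin n → Fin k)) :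
    Finset (Fin n → Fin k) :=
  (List.ofFn fun j : Fin n => σ j).foldl downshift V

/-- A polynomial is degree dominated (with dominating term `x^w`) if it equals
`x^w + Σ αᵢ x^{vᵢ}` where each `x^{vᵢ}` divides `x^w`. -/
def IsDegDominated {n : ℕ} {F : Type*} [CommSemiring F]
    (f : MvPolynomial (Fin n) F) : Prop :=
  ∃ w : Mon n, MvPolynomial.coeff w f = 1 ∧ ∀ v ∈ f.support, v ≤ w

/-- `G` is a Gröbner basis of `I` with respect to the monomial order `lin`:
`G ⊆ I` and for every nonzero `f ∈ I` some `g ∈ G` has leading monomial dividing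
the leading monomial of `f` (divisibility of monomials being `≤` of exponents). -/
def IsGroebner {n : ℕ} {F : Type*} [CommSemiring F] (lin : LinearOrder (Mon n))
    (G : Finset (MvPolynomial (Fin n) F)) (I : Ideal (MvPolynomial (Fin n) F)) : Prop :=
  (∀ g ∈ G, g ∈ I) ∧
    ∀ f ∈ I, f ≠ 0 → ∀ m : Mon n, IsLeadMon lin f m →
      ∃ g ∈ G, ∃ mg : Mon n, IsLeadMon lin g mg ∧ mg ≤ m

/-- `G` is a universal Gröbner basis of `I` if it is a Gröbner basis for every term order. -/
def IsUnivGroebner {n : ℕ} {F : Type*} [CommSemiring F]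
    (G : Finset (MvPolynomial (Fin n) F)) (I : Ideal (MvPolynomial (Fin n) F)) : Prop :=
  ∀ lin : LinearOrder (Mon n), IsTermOrder lin → IsGroebner lin G I

/-- A term order is an elimination order with respect to `x_i` if `x_i` is greater
than every monomial not involving `x_i`. -/
def IsElimOrder {n : ℕ} (lin : LinearOrder (Mon n)) (i : Fin n) : Prop :=
  IsTermOrder lin ∧ ∀ m : Mon n, m i = 0 → lin.lt m (Finsupp.single i 1)

/-- A set system `𝓕` shatters `S` if every subset of `S` is the intersection of `S`
with a member of `𝓕`. -/
def Shatters {n : ℕ} (𝓕 : Finset (Finset (Fin n))) (S : Finset (Fin n)) : Prop :=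
  ∀ T ⊆ S, ∃ Fm ∈ 𝓕, Fm ∩ S = T

open scoped Classical in
/-- The family `Sh(𝓕)` of sets shattered by `𝓕`. -/
noncomputable def shatteredFamily {n : ℕ} (𝓕 : Finset (Finset (Fin n))) :
    Finset (Finset (Fin n)) :=
  Finset.univ.filter fun S => Shatters 𝓕 S

/-- A set system is shattering-extremal if it shatters exactly `|𝓕|` sets. -/
def IsSExtremal {n : ℕ} (𝓕 : Finset (Finset (Fin n))) : Prop :=
  (shatteredFamily 𝓕).card = 𝓕.card

/-- The characteristic vector of a set, as a point of `F^n`. -/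
def charVec {n : ℕ} (F : Type*) [Field F] (Fm : Finset (Fin n)) : Fin n → F :=
  fun i => if i ∈ Fm then 1 else 0

/-- The squarefree monomial `∏_{i ∈ S} x_i` associated to a set `S ⊆ [n]`,
as an exponent vector. -/
noncomputable def setMon {n : ℕ} (S : Finset (Fin n)) : Mon n :=
  Finsupp.equivFunOnFinite.symm fun i => if i ∈ S then 1 else 0

/-- The polynomial `f_{S,H} = (∏_{i∈H} x_i) ⬝ ∏_{i∈S∖H} (x_i - 1)`. -/
noncomputable def fSH {n : ℕ} (F : Type*) [Field F] (S H : Finset (Fin n)) :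
    MvPolynomial (Fin n) F :=
  (∏ i ∈ H, X i) * ∏ i ∈ S \ H, (X i - 1)

/-- The downshift `D_i(𝓕)` of a set system. -/
def dshiftSet {n : ℕ} (𝓕 : Finset (Finset (Fin n))) (i : Fin n) :
    Finset (Finset (Fin n)) :=
  𝓕.image (fun Fm => Fm.erase i) ∪ 𝓕.filter fun Fm => i ∈ Fm ∧ Fm.erase i ∈ 𝓕

/-- The iterated downshift `D_{σ(n-1)}(⋯(D_{σ 0}(𝓕)))` of a set system:
downshifts are applied at `σ 0, σ 1, …, σ (n-1)` in this order. -/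
def iterDshiftSet {n : ℕ} (σ : Equiv.Perm (Fin n)) (𝓕 : Finset (Finset (Fin n))) :
    Finset (Finset (Fin n)) :=
  (List.ofFn fun j : Fin n => σ j).foldl dshiftSet 𝓕

/-- Restriction of an exponent vector in `ℕ^{n+1}` to its first `n` coordinates. -/
noncomputable def restrictMon {n : ℕ} (w : Mon (n + 1)) : Mon n :=
  Finsupp.equivFunOnFinite.symm fun i => w i.castSucc

namespace SEx
open MvPolynomial Finset

variable {n : ℕ} {F : Type*} [Field F]

/-! ### basic facts about `setMon`, `charVec` -/

lemma setMon_apply (S : Finset (Fin n)) (i : Fin n) :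
    setMon S i = if i ∈ S then 1 else 0 := rfl

lemma charVec_apply (Fm : Finset (Fin n)) (i : Fin n) :
    charVec F Fm i = if i ∈ Fm then 1 else 0 := rfl

lemma setMon_injective : Function.Injective (setMon (n := n)) := by
  intro S T h
  ext i
  have := congrArg (fun m : Mon n => m i) h
  simp only [setMon_apply] at this
  by_cases hS : i ∈ S <;> by_cases hT : i ∈ T <;> simp [hS, hT] at this ⊢

lemma setMon_le_iff {S T : Finset (Fin n)} : setMon S ≤ setMon T ↔ S ⊆ T := by
  constructor
  · intro h i hi
    have := h i
    simp only [setMon_apply, if_pos hi] at this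
    by_contra hT
    simp [hT] at this
  · intro h i
    simp only [setMon_apply]
    by_cases hi : i ∈ S
    · simp [hi, h hi]
    · simp [hi]

lemma setMon_support (S : Finset (Fin n)) : (setMon S).support = S := by
  ext i; simp only [Finsupp.mem_support_iff, setMon_apply]
  by_cases hi : i ∈ S <;> simp [hi]

lemma setMon_support_le (w : Mon n) : setMon w.support ≤ w := by
  intro i
  simp only [setMon_apply]
  by_cases h : i ∈ w.support
  · have : w i ≠ 0 := Finsupp.mem_support_iff.mp h
    simp [h]; omega
  · simp [h]

lemma setMon_eq_self_of_sqfree {w : Mon n} (h : ∀ i, w i ≤ 1) :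
    setMon w.support = w := by
  ext i
  simp only [setMon_apply]
  by_cases hi : i ∈ w.support
  · have h1 : w i ≠ 0 := Finsupp.mem_support_iff.mp hi
    have h2 := h i
    simp only [if_pos hi]; omega
  · have : w i = 0 := by simpa [Finsupp.mem_support_iff] using hi
    simp [hi, this]

lemma setMon_union_of_disjoint {S T : Finset (Fin n)} (h : Disjoint S T) :
    setMon (S ∪ T) = setMon S + setMon T := by
  ext i
  simp only [Finsupp.add_apply, setMon_apply, Finset.mem_union]
  by_cases hS : i ∈ S
  · have hT : i ∉ T := fun hT => (Finset.disjoint_left.mp h hS) hT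
    simp [hS, hT]
  · by_cases hT : i ∈ T <;> simp [hS, hT]

lemma charVec_injective : Function.Injective (charVec (n := n) F) := by
  intro S T h
  ext i
  have h2 := congrFun h i
  simp only [charVec_apply] at h2
  constructor
  · intro hS
    by_contra hT
    rw [if_pos hS, if_neg hT] at h2
    exact one_ne_zero h2
  · intro hT
    by_contra hS
    rw [if_neg hS, if_pos hT] at h2
    exact one_ne_zero h2.symm

end SEx
namespace SEx
open MvPolynomial Finset

variable {n : ℕ} {F : Type*} [Field F]

/-! ### generic facts about raw linear orders -/

section rawlin
variable {α : Type*} (lin : LinearOrder α)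

lemma lin_le_refl (a : α) : lin.le a a := by letI := lin; exact le_refl a
lemma lin_le_trans {a b c : α} (h1 : lin.le a b) (h2 : lin.le b c) : lin.le a c := by
  letI := lin; exact le_trans h1 h2
lemma lin_le_antisymm {a b : α} (h1 : lin.le a b) (h2 : lin.le b a) : a = b := by
  letI := lin; exact le_antisymm h1 h2
lemma lin_lt_of_le_ne {a b : α} (h1 : lin.le a b) (h2 : a ≠ b) : lin.lt a b := by
  letI := lin; exact lt_of_le_of_ne h1 h2
lemma lin_lt_irrefl (a : α) : ¬ lin.lt a a := by letI := lin; exact lt_irrefl a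
lemma lin_lt_trans {a b c : α} (h1 : lin.lt a b) (h2 : lin.lt b c) : lin.lt a c := by
  letI := lin; exact lt_trans h1 h2
lemma lin_lt_of_le_of_lt {a b c : α} (h1 : lin.le a b) (h2 : lin.lt b c) : lin.lt a c := by
  letI := lin; exact lt_of_le_of_lt h1 h2
lemma lin_ne_of_lt {a b : α} (h : lin.lt a b) : a ≠ b := by
  letI := lin; exact ne_of_lt h
lemma lin_le_of_lt {a b : α} (h : lin.lt a b) : lin.le a b := by
  letI := lin; exact le_of_lt h

lemma lin_exists_max {β : Type*} (s : Finset β) (f : β → α) (hs : s.Nonempty) :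
    ∃ x ∈ s, ∀ x' ∈ s, lin.le (f x') (f x) := by
  letI := lin; exact s.exists_max_image f hs

end rawlin

/-! ### term order basics -/

variable {lin : LinearOrder (Mon n)}

lemma termOrder_le_of_le (hlin : IsTermOrder lin) {u v : Mon n} (h : u ≤ v) :
    lin.le u v := by
  have h0 := hlin.1 (v - u)
  have h1 := hlin.2 0 (v - u) u h0
  rwa [zero_add, tsub_add_cancel_of_le h] at h1

lemma termOrder_lt_of_lt (hlin : IsTermOrder lin) {u v : Mon n} (h : u ≤ v) (hne : u ≠ v) :
    lin.lt u v :=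
  lin_lt_of_le_ne lin (termOrder_le_of_le hlin h) hne

/-! ### leading monomials -/

lemma exists_isLeadMon {f : MvPolynomial (Fin n) F} (hf : f ≠ 0) (lin : LinearOrder (Mon n)) :
    ∃ m, IsLeadMon lin f m := by
  obtain ⟨m, hm, hmax⟩ := lin_exists_max lin f.support id (support_nonempty.mpr hf)
  exact ⟨m, hm, hmax⟩

lemma isLeadMon_unique {f : MvPolynomial (Fin n) F} {m m' : Mon n}
    (h : IsLeadMon lin f m) (h' : IsLeadMon lin f m') : m = m' :=
  lin_le_antisymm lin (h'.2 m h.1) (h.2 m' h'.1)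

/-! ### the lex term order -/

noncomputable def lexOrd (n : ℕ) : LinearOrder (Mon n) :=
  LinearOrder.lift' (toLex : Mon n → Lex (Mon n)) toLex.injective

lemma lexOrd_isTermOrder : IsTermOrder (lexOrd n) := by
  constructor
  · intro u
    show (toLex (0 : Mon n)) ≤ toLex u
    exact bot_le
  · intro u v w h
    have h' : (toLex u : Lex (Mon n)) ≤ toLex v := h
    show (toLex (u + w)) ≤ toLex (v + w)
    exact add_le_add_left h' (toLex w)

end SEx
namespace SEx
open MvPolynomial Finset

variable {n : ℕ} {F : Type*} [Field F]

/-! ### products of variables as monomials -/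

lemma prod_X_eq_monomial (S : Finset (Fin n)) :
    (∏ i ∈ S, X i : MvPolynomial (Fin n) F) = monomial (setMon S) 1 := by
  classical
  induction S using Finset.induction with
  | empty =>
      have : setMon (∅ : Finset (Fin n)) = 0 := by
        ext i; simp [setMon_apply]
      simp [this, monomial_zero']
  | @insert a s ha ih =>
      rw [Finset.prod_insert ha, ih]
      have hu : setMon (insert a s) = Finsupp.single a 1 + setMon s := by
        ext i
        simp only [Finsupp.add_apply, setMon_apply, Finset.mem_insert, Finsupp.single_apply]
        by_cases hia : a = i
        · subst hia; simp [ha]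
        · by_cases his : i ∈ s <;> simp [his, hia, Ne.symm hia]
      rw [hu, X, monomial_mul, one_mul]

/-! ### expansion of `fSH` -/

open scoped Classical in
lemma fSH_eq_sum (S H : Finset (Fin n)) (hHS : H ⊆ S) :
    fSH F S H = ∑ t ∈ (S \ H).powerset,
      monomial (setMon (H ∪ t)) ((-1 : F) ^ ((S \ H) \ t).card) := by
  classical
  have h1 : ∀ i : Fin n, (X i - 1 : MvPolynomial (Fin n) F) = X i + C (-1) := by
    intro i; rw [map_neg, map_one, sub_eq_add_neg]
  rw [fSH]
  calc (∏ i ∈ H, X i) * ∏ i ∈ S \ H, (X i - 1 : MvPolynomial (Fin n) F)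
      = monomial (setMon H) 1 * ∑ t ∈ (S \ H).powerset,
          (∏ i ∈ t, X i) * ∏ _i ∈ (S \ H) \ t, C (-1 : F) := by
        rw [prod_X_eq_monomial]
        congr 1
        rw [← Finset.prod_add]
        exact Finset.prod_congr rfl fun i _ => h1 i
    _ = ∑ t ∈ (S \ H).powerset,
          monomial (setMon (H ∪ t)) ((-1 : F) ^ ((S \ H) \ t).card) := by
        rw [Finset.mul_sum]
        refine Finset.sum_congr rfl fun t ht => ?_
        rw [prod_X_eq_monomial, Finset.prod_const, ← C_pow, ← mul_assoc, monomial_mul,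
          one_mul, mul_comm, C_mul_monomial, mul_one]
        congr 1
        rw [← setMon_union_of_disjoint]
        have := Finset.mem_powerset.mp ht
        exact Finset.disjoint_left.mpr fun a haH hat =>
          (Finset.mem_sdiff.mp (this hat)).2 haH

lemma coeff_fSH_setMon (S H : Finset (Fin n)) (hHS : H ⊆ S) :
    coeff (setMon S) (fSH F S H) = 1 := by
  classical
  rw [fSH_eq_sum S H hHS]
  rw [coeff_sum]
  have key : ∀ t ∈ (S \ H).powerset, t ≠ S \ H →
      coeff (setMon S) (monomial (setMon (H ∪ t)) ((-1 : F) ^ ((S \ H) \ t).card)) = 0 := by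
    intro t ht hne
    rw [coeff_monomial, if_neg]
    intro h
    apply hne
    have hunion : H ∪ t = S := setMon_injective h
    have hts : t ⊆ S \ H := Finset.mem_powerset.mp ht
    ext a
    constructor
    · exact fun hat => hts hat
    · intro haS
      have : a ∈ H ∪ t := hunion ▸ (Finset.mem_sdiff.mp haS).1
      rcases Finset.mem_union.mp this with h' | h'
      · exact absurd h' (Finset.mem_sdiff.mp haS).2
      · exact h'
  rw [Finset.sum_eq_single (S \ H) key]
  · rw [coeff_monomial, if_pos, Finset.sdiff_self, Finset.card_empty, pow_zero]
    congr 1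
    rw [Finset.union_sdiff_of_subset hHS]
  · intro h
    exact absurd (Finset.mem_powerset.mpr Finset.Subset.rfl) h

lemma support_fSH_le (S H : Finset (Fin n)) (hHS : H ⊆ S) :
    ∀ m ∈ (fSH F S H).support, m ≤ setMon S := by
  classical
  intro m hm
  rw [fSH_eq_sum S H hHS] at hm
  have := MvPolynomial.support_sum hm
  simp only [Finset.mem_biUnion] at this
  obtain ⟨t, ht, hmt⟩ := this
  have := MvPolynomial.support_monomial_subset hmt
  rw [Finset.mem_singleton] at this
  subst this
  rw [setMon_le_iff]
  exact Finset.union_subset hHS fun a hat =>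
    (Finset.mem_sdiff.mp (Finset.mem_powerset.mp ht hat)).1

lemma fSH_ne_zero (S H : Finset (Fin n)) (hHS : H ⊆ S) : (fSH F S H : MvPolynomial (Fin n) F) ≠ 0 := by
  intro h
  have := coeff_fSH_setMon (F := F) S H hHS
  rw [h, coeff_zero] at this
  exact one_ne_zero this.symm

lemma isLeadMon_fSH {lin : LinearOrder (Mon n)} (S H : Finset (Fin n)) (hHS : H ⊆ S)
    (hlin : IsTermOrder lin) :
    IsLeadMon lin (fSH F S H) (setMon S) := by
  constructor
  · rw [mem_support_iff, coeff_fSH_setMon S H hHS]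
    exact one_ne_zero
  · exact fun m' hm' => termOrder_le_of_le hlin (support_fSH_le S H hHS m' hm')

end SEx
namespace SEx
open MvPolynomial Finset

variable {n : ℕ} {F : Type*} [Field F]

/-! ### evaluation at characteristic vectors -/

lemma eval_charVec_monomial (Fm : Finset (Fin n)) (w : Mon n) (c : F) :
    eval (charVec F Fm) (monomial w c) = if w.support ⊆ Fm then c else 0 := by
  classical
  rw [eval_monomial, Finsupp.prod]
  have h1 : ∀ i ∈ w.support, (charVec F Fm i) ^ (w i) = if i ∈ Fm then 1 else 0 := by
    intro i hi
    have hw : w i ≠ 0 := Finsupp.mem_support_iff.mp hi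
    rw [charVec_apply]
    by_cases h : i ∈ Fm
    · simp [h]
    · simp [h, zero_pow hw]
  rw [Finset.prod_congr rfl h1, Finset.prod_boole]
  by_cases h : w.support ⊆ Fm
  · rw [if_pos h, if_pos fun i hi => h hi, mul_one]
  · rw [if_neg h, if_neg, mul_zero]
    intro hall
    exact h fun i hi => hall i hi

lemma eval_charVec_fSH_of_inter_eq {Fm S H : Finset (Fin n)} (hHS : H ⊆ S)
    (h : Fm ∩ S = H) :
    eval (charVec F Fm) (fSH F S H) = (-1 : F) ^ (S \ H).card := by
  classical
  rw [fSH, map_mul, map_prod, map_prod]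
  have h1 : ∀ i ∈ H, eval (charVec F Fm) (X i : MvPolynomial (Fin n) F) = 1 := by
    intro i hi
    have : i ∈ Fm := by
      have : i ∈ Fm ∩ S := h ▸ hi
      exact (Finset.mem_inter.mp this).1
    rw [eval_X, charVec_apply, if_pos this]
  have h2 : ∀ i ∈ S \ H, eval (charVec F Fm) (X i - 1 : MvPolynomial (Fin n) F) = -1 := by
    intro i hi
    obtain ⟨hiS, hiH⟩ := Finset.mem_sdiff.mp hi
    have hiFm : i ∉ Fm := by
      intro hiFm
      exact hiH (h ▸ Finset.mem_inter.mpr ⟨hiFm, hiS⟩)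
    rw [map_sub, eval_X, map_one, charVec_apply, if_neg hiFm, zero_sub]
  rw [Finset.prod_congr rfl h1, Finset.prod_congr rfl h2, Finset.prod_const_one, one_mul,
    Finset.prod_const]

lemma eval_charVec_fSH_of_inter_ne {Fm S H : Finset (Fin n)} (hHS : H ⊆ S)
    (h : Fm ∩ S ≠ H) :
    eval (charVec F Fm) (fSH F S H) = 0 := by
  classical
  rw [fSH, map_mul, map_prod, map_prod]
  by_cases h1 : H ⊆ Fm
  · -- some i ∈ S \ H with i ∈ Fm
    have h2 : ∃ i ∈ S \ H, i ∈ Fm := by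
      by_contra hno
      push_neg at hno
      apply h
      ext a
      simp only [Finset.mem_inter]
      constructor
      · rintro ⟨haFm, haS⟩
        by_contra haH
        exact hno a (Finset.mem_sdiff.mpr ⟨haS, haH⟩) haFm
      · exact fun haH => ⟨h1 haH, hHS haH⟩
    obtain ⟨i, hi, hiFm⟩ := h2
    apply mul_eq_zero_of_right
    apply Finset.prod_eq_zero hi
    rw [map_sub, eval_X, map_one, charVec_apply, if_pos hiFm, sub_self]
  · obtain ⟨i, hiH, hiFm⟩ := Finset.not_subset.mp h1
    apply mul_eq_zero_of_left
    apply Finset.prod_eq_zero hiH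
    rw [eval_X, charVec_apply, if_neg hiFm]

/-! ### the vanishing ideal of `𝓕` -/

open scoped Classical in
variable (F) in
noncomputable abbrev VI (𝓕 : Finset (Finset (Fin n))) : Ideal (MvPolynomial (Fin n) F) :=
  vanishIdeal ((𝓕.image (charVec F) : Finset (Fin n → F)) : Set (Fin n → F))

lemma mem_VI {𝓕 : Finset (Finset (Fin n))} {f : MvPolynomial (Fin n) F} :
    f ∈ VI F 𝓕 ↔ ∀ Fm ∈ 𝓕, eval (charVec F Fm) f = 0 := by
  classical
  constructor
  · intro h Fm hFm
    refine h (charVec F Fm) ?_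
    simp only [Finset.coe_image, Set.mem_image, Finset.mem_coe]
    exact ⟨Fm, hFm, rfl⟩
  · intro h v hv
    simp only [Finset.coe_image, Set.mem_image, Finset.mem_coe] at hv
    obtain ⟨Fm, hFm, rfl⟩ := hv
    exact h Fm hFm

lemma sq_mem_VI (𝓕 : Finset (Finset (Fin n))) (i : Fin n) :
    (X i ^ 2 - X i : MvPolynomial (Fin n) F) ∈ VI F 𝓕 := by
  rw [mem_VI]
  intro Fm _
  rw [map_sub, map_pow, eval_X, charVec_apply]
  by_cases h : i ∈ Fm <;> simp [h]

lemma fSH_mem_VI_iff {𝓕 : Finset (Finset (Fin n))} {S H : Finset (Fin n)} (hHS : H ⊆ S) :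
    fSH F S H ∈ VI F 𝓕 ↔ ∀ Fm ∈ 𝓕, Fm ∩ S ≠ H := by
  rw [mem_VI]
  constructor
  · intro h Fm hFm heq
    have := h Fm hFm
    rw [eval_charVec_fSH_of_inter_eq hHS heq] at this
    exact (pow_ne_zero _ (neg_ne_zero.mpr one_ne_zero)) this
  · intro h Fm hFm
    exact eval_charVec_fSH_of_inter_ne hHS (h Fm hFm)

/-- Leading monomial of `X i ^ 2 - X i`. -/
lemma isLeadMon_sq {lin : LinearOrder (Mon n)} (hlin : IsTermOrder lin) (i : Fin n) :
    IsLeadMon lin (X i ^ 2 - X i : MvPolynomial (Fin n) F) (Finsupp.single i 2) := by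
  classical
  have hne : (Finsupp.single i 2 : Mon n) ≠ Finsupp.single i 1 := by
    intro h
    have := congrArg (fun m : Mon n => m i) h
    simp [Finsupp.single_apply] at this
  have hx2 : (X i ^ 2 : MvPolynomial (Fin n) F) = monomial (Finsupp.single i 2) 1 :=
    X_pow_eq_monomial
  have hx1 : (X i : MvPolynomial (Fin n) F) = monomial (Finsupp.single i 1) 1 := rfl
  constructor
  · rw [mem_support_iff, coeff_sub, hx2, hx1, coeff_monomial, coeff_monomial,
      if_pos rfl, if_neg (Ne.symm hne)]
    simp
  · intro m' hm'
    have hsub := MvPolynomial.support_sub (Fin n) (X i ^ 2 : MvPolynomial (Fin n) F) (X i) hm'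
    rw [Finset.mem_union] at hsub
    have hle : (Finsupp.single i 1 : Mon n) ≤ Finsupp.single i 2 := by
      intro j
      simp only [Finsupp.single_apply]
      by_cases h : i = j <;> simp [h]
    rcases hsub with h | h
    · rw [hx2, MvPolynomial.support_monomial, if_neg one_ne_zero] at h
      rw [Finset.mem_singleton] at h
      subst h
      exact lin_le_refl lin _
    · rw [MvPolynomial.support_X, Finset.mem_singleton] at h
      subst h
      exact termOrder_le_of_le hlin hle

end SEx
namespace SEx
open MvPolynomial Finset

variable {n : ℕ} {F : Type*} [Field F]

/-! ### `vecs` and the evaluation linear map -/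

variable (F) in
noncomputable def vecs (𝓕 : Finset (Finset (Fin n))) (S : Finset (Fin n)) :
    {x // x ∈ 𝓕} → F :=
  fun Fm => if S ⊆ Fm.1 then 1 else 0

variable (F) in
noncomputable def evalVL (𝓕 : Finset (Finset (Fin n))) :
    MvPolynomial (Fin n) F →ₗ[F] ({x // x ∈ 𝓕} → F) where
  toFun f := fun Fm => eval (charVec F Fm.1) f
  map_add' := by intro a b; funext Fm; simp
  map_smul' := by intro c f; funext Fm; simp [smul_eq_mul]

lemma evalVL_apply (𝓕 : Finset (Finset (Fin n))) (f : MvPolynomial (Fin n) F)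
    (Fm : {x // x ∈ 𝓕}) : evalVL F 𝓕 f Fm = eval (charVec F Fm.1) f := rfl

lemma evalVL_monomial (𝓕 : Finset (Finset (Fin n))) (w : Mon n) (c : F) :
    evalVL F 𝓕 (monomial w c) = c • vecs F 𝓕 w.support := by
  funext Fm
  rw [evalVL_apply, eval_charVec_monomial, Pi.smul_apply, vecs, smul_eq_mul,
    mul_ite, mul_one, mul_zero]

lemma mem_VI_iff_evalVL {𝓕 : Finset (Finset (Fin n))} {f : MvPolynomial (Fin n) F} :
    f ∈ VI F 𝓕 ↔ evalVL F 𝓕 f = 0 := by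
  rw [mem_VI, funext_iff]
  constructor
  · intro h Fm; rw [evalVL_apply, h Fm.1 Fm.2]; rfl
  · intro h Fm hFm; exact h ⟨Fm, hFm⟩

/-! ### multilinearization -/

noncomputable def ml (f : MvPolynomial (Fin n) F) : MvPolynomial (Fin n) F :=
  ∑ w ∈ f.support, monomial (setMon w.support) (coeff w f)

lemma eval_charVec_ml (f : MvPolynomial (Fin n) F) (Fm : Finset (Fin n)) :
    eval (charVec F Fm) (ml f) = eval (charVec F Fm) f := by
  conv_rhs => rw [← support_sum_monomial_coeff f]
  rw [ml, map_sum, map_sum]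
  refine Finset.sum_congr rfl fun w _ => ?_
  rw [eval_charVec_monomial, eval_charVec_monomial, setMon_support]

lemma ml_mem_VI {𝓕 : Finset (Finset (Fin n))} {f : MvPolynomial (Fin n) F}
    (hf : f ∈ VI F 𝓕) : ml f ∈ VI F 𝓕 := by
  rw [mem_VI] at hf ⊢
  intro Fm hFm
  rw [eval_charVec_ml]
  exact hf Fm hFm

lemma support_ml_subset {f : MvPolynomial (Fin n) F} {m : Mon n}
    (hm : m ∈ (ml f).support) : ∃ w ∈ f.support, m = setMon w.support := by
  classical
  have := MvPolynomial.support_sum hm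
  simp only [Finset.mem_biUnion] at this
  obtain ⟨w, hw, hmw⟩ := this
  have := MvPolynomial.support_monomial_subset hmw
  rw [Finset.mem_singleton] at this
  exact ⟨w, hw, this⟩

lemma coeff_ml_lead {lin : LinearOrder (Mon n)} (hlin : IsTermOrder lin)
    {f : MvPolynomial (Fin n) F} {m : Mon n} (hlead : IsLeadMon lin f m)
    (hsq : setMon m.support = m) : coeff m (ml f) = coeff m f := by
  classical
  rw [ml, coeff_sum]
  have heach : ∀ w : Mon n, coeff m (monomial (setMon w.support) (coeff w f)) =
      if setMon w.support = m then coeff w f else 0 := fun w => coeff_monomial _ _ _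
  rw [Finset.sum_congr rfl fun w _ => heach w]
  rw [Finset.sum_eq_single m]
  · rw [if_pos hsq]
  · intro w hw hne
    rw [if_neg]
    intro h
    apply hne
    have h1 : m ≤ w := h ▸ setMon_support_le w
    exact lin_le_antisymm lin (hlead.2 w hw) (termOrder_le_of_le hlin h1)
  · intro h
    rw [notMem_support_iff.mp h, if_pos hsq]

/-! ### standard monomial sets -/

open scoped Classical in
variable (F) in
noncomputable def SM (lin : LinearOrder (Mon n)) (𝓕 : Finset (Finset (Fin n))) :
    Finset (Finset (Fin n)) :=
  Finset.univ.filter fun S => setMon S ∈ stdMon lin (VI F 𝓕)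

lemma mem_SM {lin : LinearOrder (Mon n)} {𝓕 : Finset (Finset (Fin n))} {S : Finset (Fin n)} :
    S ∈ SM F lin 𝓕 ↔ setMon S ∈ stdMon lin (VI F 𝓕) := by
  classical
  simp [SM]

lemma mem_stdMon {lin : LinearOrder (Mon n)} {I : Ideal (MvPolynomial (Fin n) F)} {m : Mon n} :
    m ∈ stdMon lin I ↔ ¬ ∃ f ∈ I, f ≠ 0 ∧ IsLeadMon lin f m := Iff.rfl

/-! ### the spanning property of standard monomials -/

lemma vecs_mem_span {lin : LinearOrder (Mon n)} (hlin : IsTermOrder lin)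
    (𝓕 : Finset (Finset (Fin n))) (S : Finset (Fin n)) :
    vecs F 𝓕 S ∈ Submodule.span F (vecs F 𝓕 '' ↑(SM F lin 𝓕)) := by
  classical
  set W := Submodule.span F (vecs F 𝓕 '' ↑(SM F lin 𝓕)) with hW
  let μ : Finset (Fin n) → ℕ := fun S =>
    (Finset.univ.filter fun T : Finset (Fin n) => lin.lt (setMon T) (setMon S)).card
  have hmu : ∀ T S' : Finset (Fin n), lin.lt (setMon T) (setMon S') → μ T < μ S' := by
    intro T S' hT
    apply Finset.card_lt_card
    have hsub : (Finset.univ.filter fun T' : Finset (Fin n) => lin.lt (setMon T') (setMon T)) ⊆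
        Finset.univ.filter fun T' : Finset (Fin n) => lin.lt (setMon T') (setMon S') := by
      intro T' hT'
      rw [Finset.mem_filter] at hT' ⊢
      exact ⟨hT'.1, lin_lt_trans lin hT'.2 hT⟩
    rw [Finset.ssubset_iff_of_subset hsub]
    refine ⟨T, Finset.mem_filter.mpr ⟨Finset.mem_univ _, hT⟩, fun h => ?_⟩
    exact lin_lt_irrefl lin _ (Finset.mem_filter.mp h).2
  suffices h : ∀ k, ∀ S : Finset (Fin n), μ S < k → vecs F 𝓕 S ∈ W by
    exact h (μ S + 1) S (Nat.lt_succ_self _)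
  intro k
  induction k with
  | zero => intro S hS; omega
  | succ k ih =>
    intro S hS
    by_cases hSM : S ∈ SM F lin 𝓕
    · exact Submodule.subset_span ⟨S, by simpa using hSM, rfl⟩
    · have hstd : setMon S ∉ stdMon lin (VI F 𝓕) := fun h => hSM (mem_SM.mpr h)
      rw [mem_stdMon, not_not] at hstd
      obtain ⟨f, hfI, hf0, hlead⟩ := hstd
      set g := ml f with hg
      have hgI : g ∈ VI F 𝓕 := ml_mem_VI hfI
      have hcoeff : coeff (setMon S) g = coeff (setMon S) f :=
        coeff_ml_lead hlin hlead (by rw [setMon_support])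
      have hc0 : coeff (setMon S) g ≠ 0 := by
        rw [hcoeff]; exact mem_support_iff.mp hlead.1
      have h0 : evalVL F 𝓕 g = 0 := mem_VI_iff_evalVL.mp hgI
      have hdecomp : evalVL F 𝓕 g = ∑ m ∈ g.support, coeff m g • vecs F 𝓕 m.support := by
        conv_lhs => rw [← support_sum_monomial_coeff g]
        rw [map_sum]
        exact Finset.sum_congr rfl fun m _ => evalVL_monomial 𝓕 m (coeff m g)
      have hmemg : setMon S ∈ g.support := mem_support_iff.mpr hc0
      rw [← Finset.add_sum_erase _ _ hmemg] at hdecomp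
      rw [hdecomp] at h0
      have hterm : coeff (setMon S) g • vecs F 𝓕 ((setMon S).support) =
          - ∑ m ∈ g.support.erase (setMon S), coeff m g • vecs F 𝓕 m.support :=
        eq_neg_of_add_eq_zero_left h0
      have hrest : (∑ m ∈ g.support.erase (setMon S), coeff m g • vecs F 𝓕 m.support) ∈ W := by
        apply Submodule.sum_mem
        intro m hm
        obtain ⟨hmne, hmg⟩ := Finset.mem_erase.mp hm
        apply Submodule.smul_mem
        obtain ⟨w, hw, hmw⟩ := support_ml_subset hmg
        have hself : setMon m.support = m := by rw [hmw, setMon_support, ← hmw]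
        have hltS : lin.lt m (setMon S) := by
          apply lin_lt_of_le_ne lin _ hmne
          apply lin_le_trans lin _ (hlead.2 w hw)
          exact termOrder_le_of_le hlin (hmw ▸ setMon_support_le w)
        apply ih
        have h1 : μ m.support < μ S := by
          apply hmu
          rw [hself]
          exact hltS
        omega
      have : vecs F 𝓕 S = (coeff (setMon S) g)⁻¹ • (coeff (setMon S) g • vecs F 𝓕 S) := by
        rw [smul_smul, inv_mul_cancel₀ hc0, one_smul]
      rw [this]
      apply Submodule.smul_mem
      rw [show vecs F 𝓕 S = vecs F 𝓕 ((setMon S).support) by rw [setMon_support]]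
      rw [hterm]
      exact Submodule.neg_mem _ hrest

end SEx
namespace SEx
open MvPolynomial Finset

variable {n : ℕ} {F : Type*} [Field F]

/-! ### counting standard monomials -/

lemma card_SM {lin : LinearOrder (Mon n)} (hlin : IsTermOrder lin)
    (𝓕 : Finset (Finset (Fin n))) : (SM F lin 𝓕).card = 𝓕.card := by
  classical
  -- upper bound : linear independence
  have hli : LinearIndependent F (fun S : {S // S ∈ SM F lin 𝓕} => vecs F 𝓕 S.1) := by
    rw [Fintype.linearIndependent_iff]
    intro c hc S0
    by_contra hc0
    set f : MvPolynomial (Fin n) F :=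
      ∑ S : {S // S ∈ SM F lin 𝓕}, monomial (setMon S.1) (c S) with hf
    have hcoeff : ∀ S : {S // S ∈ SM F lin 𝓕}, coeff (setMon S.1) f = c S := by
      intro S
      rw [hf, coeff_sum]
      have heach : ∀ S' : {S // S ∈ SM F lin 𝓕},
          coeff (setMon S.1) (monomial (setMon S'.1) (c S')) =
            if S' = S then c S' else 0 := by
        intro S'
        rw [coeff_monomial]
        by_cases h : S' = S
        · rw [if_pos h, if_pos (by rw [h])]
        · rw [if_neg h, if_neg]
          intro heq
          exact h (Subtype.ext (setMon_injective heq))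
      rw [Finset.sum_congr rfl fun S' _ => heach S', Finset.sum_ite_eq' Finset.univ S
        (fun S' => c S'), if_pos (Finset.mem_univ S)]
    have hfI : f ∈ VI F 𝓕 := by
      rw [mem_VI_iff_evalVL, hf, map_sum]
      have heach : ∀ S' : {S // S ∈ SM F lin 𝓕},
          evalVL F 𝓕 (monomial (setMon S'.1) (c S')) = c S' • vecs F 𝓕 S'.1 := by
        intro S'
        rw [evalVL_monomial, setMon_support]
      rw [Finset.sum_congr rfl fun S' _ => heach S']
      exact hc
    have hf0 : f ≠ 0 := by
      intro h
      exact hc0 (by rw [← hcoeff S0, h, coeff_zero])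
    obtain ⟨m, hm⟩ := exists_isLeadMon hf0 lin
    have : ∃ S : {S // S ∈ SM F lin 𝓕}, m = setMon S.1 := by
      have hsupp := MvPolynomial.support_sum (hf ▸ hm.1)
      simp only [Finset.mem_biUnion] at hsupp
      obtain ⟨S', _, hmS'⟩ := hsupp
      have := MvPolynomial.support_monomial_subset hmS'
      rw [Finset.mem_singleton] at this
      exact ⟨S', this⟩
    obtain ⟨S1, rfl⟩ := this
    have hstd : setMon S1.1 ∈ stdMon lin (VI F 𝓕) := mem_SM.mp S1.2
    exact hstd ⟨f, hfI, hf0, hm⟩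
  have h1 : (SM F lin 𝓕).card ≤ 𝓕.card := by
    have := hli.fintype_card_le_finrank
    rwa [Module.finrank_pi, Fintype.card_coe, Fintype.card_coe] at this
  -- lower bound : spanning
  have h2 : 𝓕.card ≤ (SM F lin 𝓕).card := by
    set t : Finset ({x // x ∈ 𝓕} → F) := (SM F lin 𝓕).image (vecs F 𝓕) with ht
    have hcoet : (↑t : Set ({x // x ∈ 𝓕} → F)) = vecs F 𝓕 '' ↑(SM F lin 𝓕) := by
      rw [ht, Finset.coe_image]
    have hkey : ∀ f : MvPolynomial (Fin n) F,
        evalVL F 𝓕 f ∈ Submodule.span F (↑t : Set ({x // x ∈ 𝓕} → F)) := by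
      intro f
      rw [← support_sum_monomial_coeff f, map_sum]
      apply Submodule.sum_mem
      intro w _
      rw [evalVL_monomial]
      apply Submodule.smul_mem
      rw [hcoet]
      exact vecs_mem_span hlin 𝓕 w.support
    have hspan : Submodule.span F (↑t : Set ({x // x ∈ 𝓕} → F)) = ⊤ := by
      rw [eq_top_iff]
      intro φ _
      rw [pi_eq_sum_univ φ]
      apply Submodule.sum_mem
      intro Fm _
      apply Submodule.smul_mem
      set k := (Finset.univ \ Fm.1).card with hk
      have he : evalVL F 𝓕 (fSH F Finset.univ Fm.1) =
          (-1 : F) ^ k • fun j : {x // x ∈ 𝓕} => if Fm = j then (1 : F) else 0 := by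
        funext j
        rw [evalVL_apply, Pi.smul_apply, smul_eq_mul]
        by_cases h : Fm = j
        · have hj : j.1 ∩ Finset.univ = Fm.1 := by
            rw [Finset.inter_univ, ← h]
          rw [eval_charVec_fSH_of_inter_eq (Finset.subset_univ _) hj, if_pos h, mul_one, hk]
        · have hj : j.1 ∩ Finset.univ ≠ Fm.1 := by
            rw [Finset.inter_univ]
            exact fun heq => h (Subtype.ext heq.symm)
          rw [eval_charVec_fSH_of_inter_ne (Finset.subset_univ _) hj, if_neg h, mul_zero]
      have hsq : ((-1 : F) ^ k) * ((-1 : F) ^ k) = 1 := by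
        rw [← pow_add, Even.neg_one_pow ⟨k, rfl⟩]
      have hrw : (fun j : {x // x ∈ 𝓕} => if Fm = j then (1 : F) else 0) =
          (-1 : F) ^ k • evalVL F 𝓕 (fSH F Finset.univ Fm.1) := by
        rw [he, smul_smul, hsq, one_smul]
      rw [hrw]
      exact Submodule.smul_mem _ _ (hkey _)
    have hfr : Module.finrank F ({x // x ∈ 𝓕} → F) ≤ Fintype.card {x // x ∈ t} := by
      apply finrank_le_of_span_eq_top (v := (Subtype.val : {x // x ∈ t} → ({x // x ∈ 𝓕} → F)))
      rw [Subtype.range_coe_subtype]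
      convert hspan using 2
      rfl
    rw [Module.finrank_pi, Fintype.card_coe, Fintype.card_coe] at hfr
    exact hfr.trans (Finset.card_image_le)
  omega

end SEx
namespace SEx
open MvPolynomial Finset

variable {n : ℕ} {F : Type*} [Field F]

/-! ### shattering -/

lemma shatters_mono {𝓕 : Finset (Finset (Fin n))} {S S' : Finset (Fin n)}
    (h : _root_.Shatters 𝓕 S) (hss : S' ⊆ S) : _root_.Shatters 𝓕 S' := by
  intro T hT
  obtain ⟨Fm, hFm, hFmT⟩ := h T (hT.trans hss)
  refine ⟨Fm, hFm, ?_⟩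
  have h1 : Fm ∩ S' = Fm ∩ S ∩ S' := by
    rw [Finset.inter_assoc, Finset.inter_eq_right.mpr hss]
  rw [h1, hFmT]
  exact Finset.inter_eq_left.mpr hT

lemma not_shatters_exists {𝓕 : Finset (Finset (Fin n))} {S : Finset (Fin n)}
    (h : ¬ _root_.Shatters 𝓕 S) : ∃ T, T ⊆ S ∧ ∀ Fm ∈ 𝓕, Fm ∩ S ≠ T := by
  unfold _root_.Shatters at h
  push_neg at h
  exact h

noncomputable def pick (𝓕 : Finset (Finset (Fin n))) (S : Finset (Fin n)) : Finset (Fin n) :=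
  if h : ∃ T, T ⊆ S ∧ ∀ Fm ∈ 𝓕, Fm ∩ S ≠ T then h.choose else ∅

lemma pick_spec {𝓕 : Finset (Finset (Fin n))} {S : Finset (Fin n)} (h : ¬ _root_.Shatters 𝓕 S) :
    pick 𝓕 S ⊆ S ∧ ∀ Fm ∈ 𝓕, Fm ∩ S ≠ pick 𝓕 S := by
  have h' := not_shatters_exists h
  rw [pick, dif_pos h']
  exact h'.choose_spec

lemma SM_shatters {lin : LinearOrder (Mon n)} (hlin : IsTermOrder lin)
    {𝓕 : Finset (Finset (Fin n))} {S : Finset (Fin n)} (hS : S ∈ SM F lin 𝓕) :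
    _root_.Shatters 𝓕 S := by
  by_contra h
  obtain ⟨T, hTS, hT⟩ := not_shatters_exists h
  exact (mem_SM.mp hS)
    ⟨fSH F S T, (fSH_mem_VI_iff hTS).mpr hT, fSH_ne_zero S T hTS, isLeadMon_fSH S T hTS hlin⟩

lemma mem_shatteredFamily {𝓕 : Finset (Finset (Fin n))} {S : Finset (Fin n)} :
    S ∈ shatteredFamily 𝓕 ↔ _root_.Shatters 𝓕 S := by
  classical
  simp [shatteredFamily]

end SEx
open SEx Finset in
open scoped Classical in
/-- Theorem `ExtremalGroebner`.
`𝓕 ⊆ 2^[n]` is shattering-extremal if and only if there is a collection of pairs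
`H ⊆ S ⊆ [n]` such that the polynomials `f_{S,H}`, together with `xᵢ² - xᵢ` for
`i ∈ [n]`, form a universal Gröbner basis of `I(𝓕)`. -/
theorem sExtremal_iff_fSH_universal_groebner {n : ℕ} {F : Type*} [Field F]
    (𝓕 : Finset (Finset (Fin n))) :
    IsSExtremal 𝓕 ↔
      ∃ P : Finset (Finset (Fin n) × Finset (Fin n)),
        (∀ p ∈ P, p.2 ⊆ p.1) ∧
        IsUnivGroebner
          ((P.image fun p => fSH F p.1 p.2) ∪
            (Finset.univ.image fun i : Fin n => (X i ^ 2 - X i : MvPolynomial (Fin n) F)))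
          (vanishIdeal ((𝓕.image (charVec F) : Finset (Fin n → F)) :
            Set (Fin n → F))) := by
  constructor
  · -- extremal → universal Gröbner basis
    intro hext
    have heq : ∀ lin : LinearOrder (Mon n), IsTermOrder lin →
        SM F lin 𝓕 = shatteredFamily 𝓕 := by
      intro lin hlin
      apply Finset.eq_of_subset_of_card_le
      · intro S hS
        exact mem_shatteredFamily.mpr (SM_shatters hlin hS)
      · rw [card_SM hlin, hext]
    refine ⟨(Finset.univ.filter fun S => ¬ _root_.Shatters 𝓕 S).image fun S => (S, pick 𝓕 S),
      ?_, ?_⟩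
    · intro p hp
      rw [Finset.mem_image] at hp
      obtain ⟨S, hS, rfl⟩ := hp
      exact (pick_spec (Finset.mem_filter.mp hS).2).1
    · intro lin hlin
      constructor
      · intro g hg
        rw [Finset.mem_union] at hg
        rcases hg with hg | hg
        · rw [Finset.mem_image] at hg
          obtain ⟨p, hp, rfl⟩ := hg
          rw [Finset.mem_image] at hp
          obtain ⟨S, hS, rfl⟩ := hp
          have hns := (Finset.mem_filter.mp hS).2
          exact (fSH_mem_VI_iff (pick_spec hns).1).mpr (pick_spec hns).2
        · rw [Finset.mem_image] at hg
          obtain ⟨i, _, rfl⟩ := hg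
          exact sq_mem_VI 𝓕 i
      · intro f hfI hf0 m hm
        by_cases hcase : ∃ i, 2 ≤ m i
        · obtain ⟨i, hi⟩ := hcase
          refine ⟨X i ^ 2 - X i, Finset.mem_union_right _
            (Finset.mem_image.mpr ⟨i, Finset.mem_univ _, rfl⟩),
            Finsupp.single i 2, isLeadMon_sq hlin i, ?_⟩
          intro j
          rw [Finsupp.single_apply]
          by_cases h : i = j
          · subst h; rw [if_pos rfl]; exact hi
          · rw [if_neg h]; exact Nat.zero_le _
        · push_neg at hcase
          have hsq : ∀ i, m i ≤ 1 := fun i => by have := hcase i; omega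
          have hmm : setMon m.support = m := setMon_eq_self_of_sqfree hsq
          have hnSM : m.support ∉ SM F lin 𝓕 := by
            intro h
            have := mem_SM.mp h
            rw [hmm] at this
            exact this ⟨f, hfI, hf0, hm⟩
          rw [heq lin hlin] at hnSM
          have hnsh : ¬ _root_.Shatters 𝓕 m.support := fun h => hnSM (mem_shatteredFamily.mpr h)
          refine ⟨fSH F m.support (pick 𝓕 m.support), Finset.mem_union_left _
            (Finset.mem_image.mpr ⟨(m.support, pick 𝓕 m.support), Finset.mem_image.mpr
              ⟨m.support, Finset.mem_filter.mpr ⟨Finset.mem_univ _, hnsh⟩, rfl⟩, rfl⟩),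
            setMon m.support, isLeadMon_fSH _ _ (pick_spec hnsh).1 hlin, le_of_eq hmm⟩
  · -- universal Gröbner basis → extremal
    rintro ⟨P, hP, hUG⟩
    have hlin := lexOrd_isTermOrder (n := n)
    obtain ⟨hGI, hGB⟩ := hUG (lexOrd n) hlin
    have hsub : shatteredFamily 𝓕 ⊆ SM F (lexOrd n) 𝓕 := by
      intro S hSsh
      have hSh : _root_.Shatters 𝓕 S := mem_shatteredFamily.mp hSsh
      rw [mem_SM]
      intro hex
      obtain ⟨f, hfI, hf0, hlead⟩ := hex
      obtain ⟨g, hgG, mg, hmgLead, hmgle⟩ := hGB f hfI hf0 (setMon S) hlead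
      rw [Finset.mem_union] at hgG
      rcases hgG with hg | hg
      · rw [Finset.mem_image] at hg
        obtain ⟨p, hp, rfl⟩ := hg
        have hp21 : p.2 ⊆ p.1 := hP p hp
        have hmg : mg = setMon p.1 :=
          isLeadMon_unique hmgLead (isLeadMon_fSH p.1 p.2 hp21 hlin)
        rw [hmg, setMon_le_iff] at hmgle
        have hnone : ∀ Fm ∈ 𝓕, Fm ∩ p.1 ≠ p.2 :=
          (fSH_mem_VI_iff hp21).mp (hGI _ (Finset.mem_union_left _
            (Finset.mem_image.mpr ⟨p, hp, rfl⟩)))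
        obtain ⟨Fm, hFm, hFmEq⟩ := shatters_mono hSh hmgle p.2 hp21
        exact hnone Fm hFm hFmEq
      · rw [Finset.mem_image] at hg
        obtain ⟨i, _, rfl⟩ := hg
        have hmg : mg = Finsupp.single i 2 :=
          isLeadMon_unique hmgLead (isLeadMon_sq hlin i)
        have := hmgle i
        rw [hmg, Finsupp.single_apply, if_pos rfl, setMon_apply] at this
        by_cases h : i ∈ S
        · rw [if_pos h] at this; omega
        · rw [if_neg h] at this; omega
    have hsub2 : SM F (lexOrd n) 𝓕 ⊆ shatteredFamily 𝓕 := fun S hS =>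
      mem_shatteredFamily.mpr (SM_shatters hlin hS)
    have : shatteredFamily 𝓕 = SM F (lexOrd n) 𝓕 :=
      Finset.Subset.antisymm hsub hsub2
    rw [IsSExtremal, this, card_SM hlin]
end

section
/- Let 𝔽 be a field, n > 1, and 𝒱 ⊆ 𝔽^n a finite point set. For α ∈ 𝔽 let 𝒱_α = {v ∈ 𝔽^{n−1} : (v,α) ∈ 𝒱}. Let ≺ be the lex order on 𝔽[x_1,…,x_n] with x_1 ≻ x_2 ≻ ⋯ ≻ x_n and ≺' the lex order on 𝔽[x_1,…,x_{n−1}] with x_1 ≻ ⋯ ≻ x_{n−1}. Then a monomial x^w = x_1^{w_1}⋯x_n^{w_n} is a standard monomial of I(𝒱) with respect to ≺ if and only if there are at least w_n + 1 elements α ∈ 𝔽 for which x_1^{w_1}⋯x_{n−1}^{w_{n−1}} is a standard monomial of I(𝒱_α) with respect to ≺'. -/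
open MvPolynomial

section Aux

open Finsupp

variable {n : ℕ} {F : Type*} [Field F]

/-- Extension of an exponent vector in `ℕ^n` by a last coordinate. -/
noncomputable def extMon (u : Mon n) (j : ℕ) : Mon (n + 1) :=
  Finsupp.equivFunOnFinite.symm (Fin.snoc u j)

@[simp] lemma extMon_castSucc (u : Mon n) (j : ℕ) (i : Fin n) :
    extMon u j i.castSucc = u i := by
  simp [extMon]

@[simp] lemma extMon_last (u : Mon n) (j : ℕ) : extMon u j (Fin.last n) = j := by
  simp [extMon]

@[simp] lemma restrictMon_apply (m : Mon (n + 1)) (i : Fin n) :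
    restrictMon m i = m i.castSucc := by
  simp [restrictMon]

@[simp] lemma restrictMon_extMon (u : Mon n) (j : ℕ) : restrictMon (extMon u j) = u := by
  ext i; simp

lemma extMon_restrictMon (m : Mon (n + 1)) : extMon (restrictMon m) (m (Fin.last n)) = m := by
  ext i
  cases i using Fin.lastCases with
  | last => simp
  | cast i => simp

lemma extMon_inj {u u' : Mon n} {j j' : ℕ} (h : extMon u j = extMon u' j') :
    u = u' ∧ j = j' := by
  constructor
  · have := congrArg restrictMon h; simpa using this
  · have := congrArg (fun m : Mon (n+1) => m (Fin.last n)) h; simpa using this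

lemma extMon_eq_sum (u : Mon n) (j : ℕ) :
    Finsupp.mapDomain Fin.castSucc u + Finsupp.single (Fin.last n) j = extMon u j := by
  ext i
  cases i using Fin.lastCases with
  | last =>
    rw [Finsupp.add_apply, Finsupp.mapDomain_notin_range]
    · simp
    · rintro ⟨i, hi⟩
      exact absurd hi (Fin.castSucc_lt_last i).ne
  | cast i =>
    rw [Finsupp.add_apply, Finsupp.mapDomain_apply (Fin.castSucc_injective n)]
    simp [Finsupp.single_apply, (Fin.castSucc_lt_last i).ne']

end Aux
section Order

variable {n : ℕ}

lemma lin_le_iff {lin : LinearOrder (Mon n)} {σ : Equiv.Perm (Fin n)}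
    (h : IsLexOrder σ lin) {u v : Mon n} :
    lin.le u v ↔ u = v ∨ lexLt σ u v := by
  have h1 := @le_iff_eq_or_lt (Mon n) lin.toPartialOrder u v
  exact h1.trans (or_congr Iff.rfl (h u v))

lemma lexLt_iff {u v : Mon n} :
    lexLt (Equiv.refl (Fin n)) u v ↔
      ∃ j : Fin n, u j < v j ∧ ∀ i : Fin n, i < j → u i = v i := by
  simp [lexLt]

/-- Restriction is monotone. -/
lemma restrict_le {lin : LinearOrder (Mon (n+1))}
    (hlin : IsLexOrder (Equiv.refl (Fin (n+1))) lin)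
    {lin' : LinearOrder (Mon n)} (hlin' : IsLexOrder (Equiv.refl (Fin n)) lin')
    {m w : Mon (n+1)} (h : lin.le m w) :
    lin'.le (restrictMon m) (restrictMon w) := by
  rcases (lin_le_iff hlin).1 h with rfl | hlt
  · exact (lin_le_iff hlin').2 (Or.inl rfl)
  · rw [lexLt_iff] at hlt
    obtain ⟨j, hj, heq⟩ := hlt
    cases j using Fin.lastCases with
    | last =>
      have : restrictMon m = restrictMon w := by
        ext i; simpa using heq i.castSucc (Fin.castSucc_lt_last i)
      exact (lin_le_iff hlin').2 (Or.inl this)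
    | cast j =>
      refine (lin_le_iff hlin').2 (Or.inr (lexLt_iff.2 ⟨j, by simpa using hj, fun i hi => ?_⟩))
      simpa using heq i.castSucc (by simpa using hi)

lemma lexLt_of_restrict_lt {m w : Mon (n+1)}
    (h : lexLt (Equiv.refl (Fin n)) (restrictMon m) (restrictMon w)) :
    lexLt (Equiv.refl (Fin (n+1))) m w := by
  rw [lexLt_iff] at h ⊢
  obtain ⟨j, hj, heq⟩ := h
  refine ⟨j.castSucc, by simpa using hj, fun i hi => ?_⟩
  cases i using Fin.lastCases with
  | last => exact absurd hi (not_lt_of_gt (Fin.castSucc_lt_last j))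
  | cast i =>
    have : i < j := by simpa using hi
    simpa using heq i this

lemma lexLt_of_restrict_eq {m w : Mon (n+1)}
    (h : restrictMon m = restrictMon w) (hlt : m (Fin.last n) < w (Fin.last n)) :
    lexLt (Equiv.refl (Fin (n+1))) m w := by
  rw [lexLt_iff]
  refine ⟨Fin.last n, hlt, fun i hi => ?_⟩
  cases i using Fin.lastCases with
  | last => exact absurd hi (lt_irrefl _)
  | cast i =>
    have := congrArg (fun u : Mon n => u i) h
    simpa using this

end Order
section Sub

variable {n : ℕ} {F : Type*} [Field F]

/-- Substitute the last variable by `α`. -/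
noncomputable def subLast (α : F) :
    MvPolynomial (Fin (n + 1)) F →+* MvPolynomial (Fin n) F :=
  MvPolynomial.eval₂Hom MvPolynomial.C (Fin.snoc MvPolynomial.X (MvPolynomial.C α))

lemma eval_subLast (α : F) (v : Fin n → F) (f : MvPolynomial (Fin (n + 1)) F) :
    MvPolynomial.eval v (subLast α f) = MvPolynomial.eval (Fin.snoc v α) f := by
  have : (MvPolynomial.eval v).comp (subLast (n := n) α)
      = MvPolynomial.eval (Fin.snoc v α) := by
    apply MvPolynomial.ringHom_ext
    · intro a; simp [subLast]
    · intro i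
      cases i using Fin.lastCases with
      | last => simp [subLast]
      | cast i => simp [subLast]
  exact congrFun (congrArg (fun g : _ →+* _ => g.toFun) this) f

lemma subLast_monomial (α : F) (m : Mon (n + 1)) (c : F) :
    subLast α (MvPolynomial.monomial m c)
      = MvPolynomial.monomial (restrictMon m) (c * α ^ m (Fin.last n)) := by
  rw [subLast, MvPolynomial.eval₂Hom_monomial]
  rw [Finsupp.prod_fintype _ _ (fun i => pow_zero _)]
  rw [MvPolynomial.monomial_eq, Finsupp.prod_fintype _ _ (fun i => pow_zero _)]
  rw [Fin.prod_univ_castSucc]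
  simp only [Fin.snoc_castSucc, Fin.snoc_last, restrictMon_apply, map_mul, ← MvPolynomial.C_pow]
  ring

lemma subLast_eq_sum (α : F) (f : MvPolynomial (Fin (n + 1)) F) :
    subLast α f = ∑ m ∈ f.support,
      MvPolynomial.monomial (restrictMon m) (MvPolynomial.coeff m f * α ^ m (Fin.last n)) := by
  conv_lhs => rw [← MvPolynomial.support_sum_monomial_coeff f]
  rw [map_sum]
  exact Finset.sum_congr rfl fun m _ => subLast_monomial α m _

lemma coeff_subLast (α : F) (f : MvPolynomial (Fin (n + 1)) F) (u : Mon n) :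
    MvPolynomial.coeff u (subLast α f) = ∑ m ∈ f.support,
      (if restrictMon m = u then MvPolynomial.coeff m f * α ^ m (Fin.last n) else 0) := by
  rw [subLast_eq_sum, MvPolynomial.coeff_sum]
  exact Finset.sum_congr rfl fun m _ => MvPolynomial.coeff_monomial u _ _

lemma support_subLast (α : F) (f : MvPolynomial (Fin (n + 1)) F) {u : Mon n}
    (hu : u ∈ (subLast α f).support) :
    ∃ m ∈ f.support, restrictMon m = u := by
  rw [MvPolynomial.mem_support_iff, coeff_subLast] at hu
  obtain ⟨m, hm, hne⟩ := Finset.exists_ne_zero_of_sum_ne_zero hu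
  refine ⟨m, hm, ?_⟩
  by_contra h
  rw [if_neg h] at hne
  exact hne rfl

lemma coeff_subLast_eq_sum_range (α : F) (f : MvPolynomial (Fin (n + 1)) F) (u : Mon n)
    (D : ℕ) (hD : ∀ m ∈ f.support, restrictMon m = u → m (Fin.last n) ≤ D) :
    MvPolynomial.coeff u (subLast α f)
      = ∑ j ∈ Finset.range (D + 1), MvPolynomial.coeff (extMon u j) f * α ^ j := by
  rw [coeff_subLast, ← Finset.sum_filter]
  rw [← Finset.sum_filter_of_ne (p := fun j => extMon u j ∈ f.support)
    (by
      intro j hj hne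
      by_contra h
      rw [MvPolynomial.notMem_support_iff] at h
      rw [h, zero_mul] at hne
      exact hne rfl)]
  refine Finset.sum_nbij' (fun m => m (Fin.last n)) (fun j => extMon u j) ?_ ?_ ?_ ?_ ?_
  · intro m hm
    rw [Finset.mem_filter] at hm
    rw [Finset.mem_filter, Finset.mem_range]
    refine ⟨Nat.lt_succ_of_le (hD m hm.1 hm.2), ?_⟩
    rw [← hm.2, extMon_restrictMon]
    exact hm.1
  · intro j hj
    rw [Finset.mem_filter] at hj
    rw [Finset.mem_filter]
    exact ⟨hj.2, by simp⟩
  · intro m hm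
    rw [Finset.mem_filter] at hm
    show extMon u (m (Fin.last n)) = m
    rw [← hm.2, extMon_restrictMon]
  · intro j hj
    simp
  · intro m hm
    rw [Finset.mem_filter] at hm
    have : extMon u (m (Fin.last n)) = m := by rw [← hm.2, extMon_restrictMon]
    rw [this]

end Sub
section Emb

variable {n : ℕ} {F : Type*} [Field F]

/-- Lift a univariate polynomial to a polynomial in the last variable. -/
noncomputable def liftLast (q : Polynomial F) : MvPolynomial (Fin (n + 1)) F :=
  Polynomial.aeval (MvPolynomial.X (Fin.last n)) q

lemma coeff_emb_mul_liftLast (g : MvPolynomial (Fin n) F) (q : Polynomial F)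
    (u : Mon n) (j : ℕ) :
    MvPolynomial.coeff (extMon u j) (MvPolynomial.rename Fin.castSucc g * liftLast q)
      = MvPolynomial.coeff u g * q.coeff j := by
  induction q using Polynomial.induction_on' with
  | add p q hp hq =>
    simp only [liftLast] at hp hq
    simp only [liftLast, map_add, mul_add, MvPolynomial.coeff_add, Polynomial.coeff_add, hp, hq]
  | monomial k c =>
    induction g using MvPolynomial.induction_on' with
    | monomial u' c' =>
      rw [liftLast, Polynomial.aeval_monomial, MvPolynomial.rename_monomial]
      rw [MvPolynomial.algebraMap_eq, MvPolynomial.C_mul_X_pow_eq_monomial]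
      rw [MvPolynomial.monomial_mul, MvPolynomial.coeff_monomial,
        extMon_eq_sum, Polynomial.coeff_monomial, MvPolynomial.coeff_monomial]
      rcases eq_or_ne u' u with rfl | h1
      · rcases eq_or_ne k j with rfl | h2
        · rw [if_pos rfl, if_pos rfl, if_pos rfl, mul_comm]
        · rw [if_neg (fun he => h2 (extMon_inj he).2), if_pos rfl, if_neg h2, mul_zero]
      · rw [if_neg (fun he => h1 (extMon_inj he).1), if_neg h1, zero_mul]
    | add p q hp hq =>
      simp only [map_add, add_mul, MvPolynomial.coeff_add, hp, hq]
lemma eval_emb_mul_liftLast (x : Fin (n + 1) → F) (g : MvPolynomial (Fin n) F)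
    (q : Polynomial F) :
    MvPolynomial.eval x (MvPolynomial.rename Fin.castSucc g * liftLast q)
      = MvPolynomial.eval (x ∘ Fin.castSucc) g * q.eval (x (Fin.last n)) := by
  rw [map_mul, MvPolynomial.eval_rename]
  congr 1
  induction q using Polynomial.induction_on' with
  | add p q hp hq =>
    simp only [liftLast] at hp hq
    simp [liftLast, hp, hq]
  | monomial k c => simp [liftLast, Polynomial.aeval_monomial, MvPolynomial.algebraMap_eq]

lemma mem_vanishIdeal_iff {m : ℕ} (V : Set (Fin m → F)) (f : MvPolynomial (Fin m) F) :
    f ∈ vanishIdeal V ↔ ∀ v ∈ V, MvPolynomial.eval v f = 0 := Iff.rfl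

lemma mem_stdMon_iff {m : ℕ} (lin : LinearOrder (Mon m))
    (I : Ideal (MvPolynomial (Fin m) F)) (u : Mon m) :
    u ∈ stdMon lin I ↔ ¬ ∃ f ∈ I, f ≠ 0 ∧ IsLeadMon lin f u := Iff.rfl

end Emb
section Main

variable {n : ℕ} {F : Type*} [Field F]

lemma lin_not_le_of_lt {m : ℕ} {lin : LinearOrder (Mon m)} {u v : Mon m}
    (h : lin.lt u v) : ¬ lin.le v u :=
  @not_le_of_gt (Mon m) lin.toPreorder u v h

lemma snoc_comp_castSucc (q : Fin (n + 1) → F) :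
    Fin.snoc (q ∘ Fin.castSucc) (q (Fin.last n)) = q := by
  ext i
  cases i using Fin.lastCases with
  | last => simp
  | cast i => simp

lemma backward_dir (V : Finset (Fin (n + 1) → F))
    (lin : LinearOrder (Mon (n + 1))) (hlin : IsLexOrder (Equiv.refl (Fin (n + 1))) lin)
    (lin' : LinearOrder (Mon n)) (hlin' : IsLexOrder (Equiv.refl (Fin n)) lin')
    (w : Mon (n + 1)) (A : Finset F) (hA : w (Fin.last n) + 1 ≤ A.card)
    (hstd : ∀ α ∈ A, restrictMon w ∈
      stdMon lin' (vanishIdeal {v : Fin n → F | Fin.snoc v α ∈ V})) :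
    w ∈ stdMon lin (vanishIdeal (V : Set (Fin (n + 1) → F))) := by
  rw [mem_stdMon_iff]
  rintro ⟨f, hfI, hf0, hw_supp, hw_le⟩
  set d := w (Fin.last n) with hd
  set w' := restrictMon w with hw'
  -- support bound in the last variable
  have hbound : ∀ m ∈ f.support, restrictMon m = w' → m (Fin.last n) ≤ d := by
    intro m hm hr
    by_contra hgt
    push_neg at hgt
    have h2 : lin.lt w m :=
      (hlin w m).2 (lexLt_of_restrict_eq (hw' ▸ hr.symm) hgt)
    exact lin_not_le_of_lt h2 (hw_le m hm)
  -- the coefficient polynomial of x^{w'}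
  set c : Polynomial F := ∑ j ∈ Finset.range (d + 1),
    Polynomial.monomial j (MvPolynomial.coeff (extMon w' j) f) with hc
  have hcoeff : ∀ k, k ≤ d → c.coeff k = MvPolynomial.coeff (extMon w' k) f := by
    intro k hk
    rw [hc, Polynomial.finset_sum_coeff]
    rw [Finset.sum_congr rfl (fun j _ => by rw [Polynomial.coeff_monomial])]
    rw [Finset.sum_ite_eq' (Finset.range (d + 1)) k]
    rw [if_pos (Finset.mem_range.2 (Nat.lt_succ_of_le hk))]
  have hcd : c.coeff d ≠ 0 := by
    rw [hcoeff d le_rfl, hw', extMon_restrictMon]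
    exact MvPolynomial.mem_support_iff.1 hw_supp
  have hcne : c ≠ 0 := fun h => hcd (by rw [h, Polynomial.coeff_zero])
  have hdeg : c.natDegree ≤ d := by
    apply Polynomial.natDegree_sum_le_of_forall_le
    intro j hj
    exact le_trans (Polynomial.natDegree_monomial_le _) (Nat.lt_succ_iff.1 (Finset.mem_range.1 hj))
  -- find α ∈ A with c.eval α ≠ 0
  have hex : ∃ α ∈ A, c.eval α ≠ 0 := by
    by_contra h
    push_neg at h
    exact hcne (Polynomial.eq_zero_of_natDegree_lt_card_of_eval_eq_zero' c A h
      (lt_of_le_of_lt hdeg (lt_of_lt_of_le (Nat.lt_succ_self d) hA)))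
  obtain ⟨α, hαA, hα⟩ := hex
  -- the substituted polynomial contradicts standardness at α
  refine hstd α hαA ⟨subLast α f, ?_, ?_, ?_, ?_⟩
  · rw [mem_vanishIdeal_iff]
    intro v hv
    rw [eval_subLast]
    exact hfI (Fin.snoc v α) hv
  · intro h0
    apply hα
    have := coeff_subLast_eq_sum_range α f w' d hbound
    rw [h0, MvPolynomial.coeff_zero] at this
    rw [Polynomial.eval_finset_sum]
    rw [Finset.sum_congr rfl (fun j _ => by rw [Polynomial.eval_monomial])]
    exact this.symm
  · rw [MvPolynomial.mem_support_iff, coeff_subLast_eq_sum_range α f w' d hbound]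
    intro h0
    apply hα
    rw [Polynomial.eval_finset_sum]
    rw [Finset.sum_congr rfl (fun j _ => by rw [Polynomial.eval_monomial])]
    exact h0
  · intro u hu
    obtain ⟨m, hm, rfl⟩ := support_subLast α f hu
    exact restrict_le hlin hlin' (hw_le m hm)

open MvPolynomial in
lemma forward_dir (V : Finset (Fin (n + 1) → F))
    (lin : LinearOrder (Mon (n + 1))) (hlin : IsLexOrder (Equiv.refl (Fin (n + 1))) lin)
    (lin' : LinearOrder (Mon n)) (hlin' : IsLexOrder (Equiv.refl (Fin n)) lin')
    (w : Mon (n + 1))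
    (hS : ¬ ∃ A : Finset F, w (Fin.last n) + 1 ≤ A.card ∧
        ∀ α ∈ A, restrictMon w ∈
          stdMon lin' (vanishIdeal {v : Fin n → F | Fin.snoc v α ∈ V})) :
    ∃ f ∈ vanishIdeal (V : Set (Fin (n + 1) → F)), f ≠ 0 ∧ IsLeadMon lin f w := by
  classical
  set d := w (Fin.last n) with hd
  set w' := restrictMon w with hw'
  set A₀ : Finset F := V.image (fun p => p (Fin.last n)) with hA₀
  set S : Finset F := A₀.filter (fun α =>
    restrictMon w ∈ stdMon lin' (vanishIdeal {v : Fin n → F | Fin.snoc v α ∈ V})) with hSdef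
  have hcard : S.card ≤ d := by
    by_contra h
    push_neg at h
    exact hS ⟨S, h, fun α hα => (Finset.mem_filter.1 hα).2⟩
  set T : Finset F := A₀ \ S with hT
  -- choose a normalized witness polynomial for every α ∈ T
  have hgex : ∀ α : F, ∃ gα : MvPolynomial (Fin n) F, α ∈ T →
      (∀ v : Fin n → F, Fin.snoc v α ∈ V → MvPolynomial.eval v gα = 0) ∧
      MvPolynomial.coeff w' gα = 1 ∧ ∀ u ∈ gα.support, lin'.le u w' := by
    intro α
    by_cases hα : α ∈ T
    · have hns : ¬ (restrictMon w ∈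
          stdMon lin' (vanishIdeal {v : Fin n → F | Fin.snoc v α ∈ V})) := by
        intro hmem
        have h1 : α ∈ A₀ := (Finset.mem_sdiff.1 hα).1
        exact (Finset.mem_sdiff.1 hα).2 (Finset.mem_filter.2 ⟨h1, hmem⟩)
      rw [mem_stdMon_iff, not_not] at hns
      obtain ⟨g₀, hg₀I, hg₀0, hg₀supp, hg₀le⟩ := hns
      set c := MvPolynomial.coeff w' g₀ with hcg
      have hc : c ≠ 0 := MvPolynomial.mem_support_iff.1 (hw' ▸ hg₀supp)
      refine ⟨c⁻¹ • g₀, fun _ => ⟨?_, ?_, ?_⟩⟩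
      · intro v hv
        rw [MvPolynomial.smul_eq_C_mul, map_mul, MvPolynomial.eval_C]
        rw [hg₀I v hv, mul_zero]
      · rw [MvPolynomial.coeff_smul, smul_eq_mul, inv_mul_cancel₀ hc]
      · intro u hu
        apply hg₀le
        rw [MvPolynomial.mem_support_iff] at hu ⊢
        rw [MvPolynomial.coeff_smul, smul_eq_mul] at hu
        exact right_ne_zero_of_mul hu
    · exact ⟨0, fun h => absurd h hα⟩
  choose g hgP using hgex
  -- the Lagrange basis polynomials on T and the monic factor
  set ℓ : F → Polynomial F := Lagrange.basis T id with hℓ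
  set p : Polynomial F :=
    Polynomial.X ^ (d - S.card) * ∏ α ∈ S, (Polynomial.X - Polynomial.C α) with hp
  have hmonic : p.Monic :=
    (Polynomial.monic_X_pow _).mul
      (Polynomial.monic_prod_of_monic _ _ fun α _ => Polynomial.monic_X_sub_C α)
  have hpdeg : p.natDegree = d := by
    rw [hp, Polynomial.Monic.natDegree_mul (Polynomial.monic_X_pow _)
      (Polynomial.monic_prod_of_monic _ _ fun α _ => Polynomial.monic_X_sub_C α)]
    rw [Polynomial.natDegree_X_pow]
    rw [Polynomial.natDegree_prod _ _ (fun α _ => Polynomial.X_sub_C_ne_zero α)]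
    rw [Finset.sum_congr rfl (fun α _ => Polynomial.natDegree_X_sub_C α)]
    rw [Finset.sum_const, smul_eq_mul, mul_one]
    omega
  have hpd : p.coeff d = 1 := by
    have := hmonic.coeff_natDegree
    rwa [hpdeg] at this
  have hpj : ∀ j, d < j → p.coeff j = 0 := by
    intro j hj
    exact Polynomial.coeff_eq_zero_of_natDegree_lt (hpdeg ▸ hj)
  have hpS : ∀ α ∈ S, p.eval α = 0 := by
    intro α hα
    rw [hp, Polynomial.eval_mul, Polynomial.eval_prod]
    rw [Finset.prod_eq_zero hα (by simp), mul_zero]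
  -- the witness polynomial
  set f : MvPolynomial (Fin (n + 1)) F :=
    (∑ α ∈ T, MvPolynomial.rename Fin.castSucc (g α) * liftLast (p * ℓ α))
      + MvPolynomial.rename Fin.castSucc (MvPolynomial.monomial w' (1 : F))
        * liftLast (p * (1 - ∑ α ∈ T, ℓ α)) with hf
  have hfc : ∀ (u : Mon n) (j : ℕ), MvPolynomial.coeff (extMon u j) f
      = (∑ α ∈ T, MvPolynomial.coeff u (g α) * (p * ℓ α).coeff j)
        + MvPolynomial.coeff u (MvPolynomial.monomial w' (1 : F))
          * (p * (1 - ∑ α ∈ T, ℓ α)).coeff j := by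
    intro u j
    rw [hf, MvPolynomial.coeff_add, MvPolynomial.coeff_sum]
    rw [Finset.sum_congr rfl (fun α _ => coeff_emb_mul_liftLast (g α) (p * ℓ α) u j)]
    rw [coeff_emb_mul_liftLast]
  have hfw' : ∀ j : ℕ, MvPolynomial.coeff (extMon w' j) f = p.coeff j := by
    intro j
    rw [hfc]
    rw [Finset.sum_congr rfl (fun α hα => by rw [(hgP α hα).2.1, one_mul])]
    rw [MvPolynomial.coeff_monomial, if_pos rfl, one_mul]
    have h1 : (∑ α ∈ T, (p * ℓ α).coeff j) = (p * ∑ α ∈ T, ℓ α).coeff j := by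
      rw [Finset.mul_sum, Polynomial.finset_sum_coeff]
    rw [h1, ← Polynomial.coeff_add]
    congr 1
    ring
  have hfw : MvPolynomial.coeff w f = 1 := by
    have := hfw' d
    rwa [hw', hd, extMon_restrictMon, hpd] at this
  refine ⟨f, ?_, ?_, ?_, ?_⟩
  · -- vanishing on V
    rw [mem_vanishIdeal_iff]
    intro q hq
    have hqV : q ∈ V := hq
    set β := q (Fin.last n) with hβ
    have hβA : β ∈ A₀ := Finset.mem_image.2 ⟨q, hqV, rfl⟩
    rw [hf, map_add, map_sum]
    rw [Finset.sum_congr rfl (fun α _ => eval_emb_mul_liftLast q (g α) (p * ℓ α))]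
    rw [eval_emb_mul_liftLast]
    by_cases hβS : β ∈ S
    · rw [Finset.sum_congr rfl (fun α _ => by
        rw [Polynomial.eval_mul, hpS β hβS, zero_mul, mul_zero])]
      rw [Polynomial.eval_mul, hpS β hβS, zero_mul, mul_zero, Finset.sum_const_zero, add_zero]
    · have hβT : β ∈ T := Finset.mem_sdiff.2 ⟨hβA, hβS⟩
      have hsum : ∀ α ∈ T, α ≠ β → (ℓ α).eval β = 0 := by
        intro α _ hne
        simpa using Lagrange.eval_basis_of_ne (v := (id : F → F)) (i := α) (j := β) hne hβT
      have hself : (ℓ β).eval β = 1 :=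
        Lagrange.eval_basis_self (Set.injOn_id _) hβT
      have hLsum : (∑ α ∈ T, ℓ α).eval β = 1 := by
        rw [Polynomial.eval_finset_sum]
        rw [Finset.sum_eq_single β (fun α hα hne => hsum α hα hne) (fun h => absurd hβT h)]
        exact hself
      have hzero : MvPolynomial.eval (q ∘ Fin.castSucc) (g β) = 0 := by
        apply (hgP β hβT).1
        rw [hβ, snoc_comp_castSucc q]
        exact hqV
      rw [Finset.sum_eq_single β
        (fun α hα hne => by rw [Polynomial.eval_mul, hsum α hα hne, mul_zero, mul_zero])
        (fun h => absurd hβT h)]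
      rw [hzero, zero_mul, zero_add]
      rw [Polynomial.eval_mul, Polynomial.eval_sub, Polynomial.eval_one, hLsum,
        sub_self, mul_zero, mul_zero]
  · -- nonzero
    intro h0
    rw [h0, MvPolynomial.coeff_zero] at hfw
    exact one_ne_zero hfw.symm
  · exact MvPolynomial.mem_support_iff.2 (by rw [hfw]; exact one_ne_zero)
  · -- leading monomial
    intro m hm
    have hmec : extMon (restrictMon m) (m (Fin.last n)) = m := extMon_restrictMon m
    have hmc : MvPolynomial.coeff m f ≠ 0 := MvPolynomial.mem_support_iff.1 hm
    by_cases hu : restrictMon m = w'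
    · have hpm : MvPolynomial.coeff m f = p.coeff (m (Fin.last n)) := by
        conv_lhs => rw [← hmec, hu]
        rw [hfw']
      have hjd : m (Fin.last n) ≤ d := by
        by_contra hgt
        push_neg at hgt
        exact hmc (hpm.trans (hpj _ hgt))
      rcases lt_or_eq_of_le hjd with hlt | heq
      · exact (lin_le_iff hlin).2 (Or.inr (lexLt_of_restrict_eq (hu.trans hw'.symm) hlt))
      · have : m = w := by
          rw [← hmec, hu, heq, hd, hw', extMon_restrictMon]
        exact (lin_le_iff hlin).2 (Or.inl this)
    · have hm2 : MvPolynomial.coeff m f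
          = ∑ α ∈ T, MvPolynomial.coeff (restrictMon m) (g α) * (p * ℓ α).coeff (m (Fin.last n)) := by
        rw [← hmec, hfc, MvPolynomial.coeff_monomial, if_neg (fun h => hu h.symm), zero_mul,
          add_zero, restrictMon_extMon, extMon_last]
      rw [hm2] at hmc
      obtain ⟨α, hα, hne⟩ := Finset.exists_ne_zero_of_sum_ne_zero hmc
      have hgu : restrictMon m ∈ (g α).support :=
        MvPolynomial.mem_support_iff.2 (left_ne_zero_of_mul hne)
      have hle : lin'.le (restrictMon m) w' := (hgP α hα).2.2 _ hgu
      rcases (lin_le_iff hlin').1 hle with heq | hlt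
      · exact absurd heq hu
      · exact (lin_le_iff hlin).2 (Or.inr (lexLt_of_restrict_lt (hw' ▸ hlt)))
end Main
/-- Felszeghy–Ráth–Rónyai recursion.
Over `n + 1 ≥ 2` variables with the standard lex order (`x_0 ≻ ⋯ ≻ x_n`), a monomial
`x^w` is a standard monomial of `I(𝒱)` if and only if there are at least `w_n + 1`
elements `α ∈ 𝔽` for which `x_0^{w_0}⋯x_{n-1}^{w_{n-1}}` is a standard monomial of
`I(𝒱_α)`, where `𝒱_α = {v : (v,α) ∈ 𝒱}`. -/
theorem stdMon_recursion_sections {n : ℕ} (hn : 0 < n) {F : Type*} [Field F]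
    (V : Finset (Fin (n + 1) → F))
    (lin : LinearOrder (Mon (n + 1))) (hlin : IsLexOrder (Equiv.refl (Fin (n + 1))) lin)
    (lin' : LinearOrder (Mon n)) (hlin' : IsLexOrder (Equiv.refl (Fin n)) lin')
    (w : Mon (n + 1)) :
    w ∈ stdMon lin (vanishIdeal (V : Set (Fin (n + 1) → F))) ↔
      ∃ A : Finset F, w (Fin.last n) + 1 ≤ A.card ∧
        ∀ α ∈ A, restrictMon w ∈
          stdMon lin' (vanishIdeal {v : Fin n → F | Fin.snoc v α ∈ V}) := by
  constructor
  · intro hw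
    by_contra hA
    exact hw (forward_dir V lin hlin lin' hlin' w hA)
  · rintro ⟨A, hA1, hA2⟩
    exact backward_dir V lin hlin lin' hlin' w A hA1 hA2
end

section
/- If a finite point set 𝒱 ⊆ {0,1,…,k−1}^n is a down-set, then D_i(𝒱) = 𝒱 for every i ∈ [n]; consequently every finite down-set 𝒱 ⊆ {0,1,…,k−1}^n is extremal. -/
open MvPolynomial

/-! ### Auxiliary development -/

section Aux
open Finset

/-- The one–variable "falling" product `∏_{j<t} (x_i - j)`. -/
noncomputable def Qp {n : ℕ} (i : Fin n) (t : ℕ) : MvPolynomial (Fin n) ℚ :=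
  ∏ j ∈ Finset.range t, (X i - C (j : ℚ))

/-- The interpolating polynomial `P_m = ∏_i ∏_{j < m i} (x_i - j)`. -/
noncomputable def Pm {n : ℕ} (m : Mon n) : MvPolynomial (Fin n) ℚ :=
  ∏ i, Qp i (m i)

theorem Qp_support {n : ℕ} (i : Fin n) (t : ℕ) :
    (∀ e ∈ (Qp i t).support, e ≤ Finsupp.single i t) ∧
      coeff (Finsupp.single i t) (Qp i t) = 1 := by
  induction t with
  | zero =>
    constructor
    · intro e he
      simp only [Qp, Finset.range_zero, Finset.prod_empty, MvPolynomial.mem_support_iff,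
        MvPolynomial.coeff_one, ne_eq, ite_eq_right_iff, not_forall] at he
      simp [he.1.symm]
    · simp [Qp]
  | succ t ih =>
    have hstep : Qp i (t + 1) = Qp i t * (X i - C (t : ℚ)) := by
      rw [Qp, Finset.prod_range_succ]; rfl
    have hco : ∀ e : Mon n, ¬ e ≤ Finsupp.single i t → coeff e (Qp i t) = 0 := by
      intro e he
      by_contra h
      exact he (ih.1 e (by simp [MvPolynomial.mem_support_iff, h]))
    constructor
    · intro e he
      rw [MvPolynomial.mem_support_iff, hstep, coeff_mul] at he
      obtain ⟨⟨a, b⟩, hab, hne⟩ := Finset.exists_ne_zero_of_sum_ne_zero he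
      rw [Finset.HasAntidiagonal.mem_antidiagonal] at hab
      have ha : a ≤ Finsupp.single i t := by
        by_contra h; exact hne (by simp [hco a h])
      have hb : b ≤ Finsupp.single i 1 := by
        have hb' : coeff b (X i - C (t:ℚ)) ≠ 0 := right_ne_zero_of_mul hne
        rcases eq_or_ne b (Finsupp.single i 1) with rfl | h1
        · exact le_refl _
        rcases eq_or_ne b 0 with rfl | h0
        · simp
        exfalso
        apply hb'
        rw [MvPolynomial.coeff_sub, MvPolynomial.coeff_X', MvPolynomial.coeff_C,
          if_neg (fun hh => h1 hh.symm), if_neg (fun hh => h0 hh.symm)]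
        ring
      calc e = a + b := hab.symm
        _ ≤ Finsupp.single i t + Finsupp.single i 1 := add_le_add ha hb
        _ = Finsupp.single i (t + 1) := by rw [← Finsupp.single_add]
    · rw [hstep, mul_sub, MvPolynomial.coeff_sub]
      have h1 : coeff (Finsupp.single i (t+1)) (Qp i t * X i) = 1 := by
        have : (Finsupp.single i (t+1) : Mon n) = Finsupp.single i t + Finsupp.single i 1 := by
          rw [← Finsupp.single_add]
        rw [this, MvPolynomial.coeff_mul_X]
        exact ih.2
      have h2 : coeff (Finsupp.single i (t+1)) (Qp i t * C (t:ℚ)) = 0 := by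
        rw [mul_comm, MvPolynomial.coeff_C_mul, hco]
        · ring
        · intro h
          have := h i
          simp at this
      rw [h1, h2]; ring

theorem mon_add_eq {n : ℕ} {x y a b : Mon n} (hx : x ≤ a) (hy : y ≤ b)
    (h : x + y = a + b) : x = a ∧ y = b := by
  rw [Finsupp.le_def] at hx hy
  constructor <;> ext j <;>
  · have := DFunLike.congr_fun h j
    simp only [Finsupp.add_apply] at this
    have h1 := hx j; have h2 := hy j
    omega

theorem coeff_top_mul {n : ℕ} {p q : MvPolynomial (Fin n) ℚ} {a b : Mon n}
    (hp : ∀ e ∈ p.support, e ≤ a) (hq : ∀ e ∈ q.support, e ≤ b) :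
    coeff (a + b) (p * q) = coeff a p * coeff b q := by
  rw [coeff_mul]
  refine Finset.sum_eq_single_of_mem (a, b) (by rw [Finset.HasAntidiagonal.mem_antidiagonal]) ?_
  rintro ⟨x, y⟩ hxy hne
  rw [Finset.HasAntidiagonal.mem_antidiagonal] at hxy
  rcases eq_or_ne (coeff x p) 0 with h | h
  · simp [h]
  rcases eq_or_ne (coeff y q) 0 with h' | h'
  · simp [h']
  exfalso
  obtain ⟨hx, hy⟩ := mon_add_eq (hp x (by simpa [MvPolynomial.mem_support_iff] using h))
    (hq y (by simpa [MvPolynomial.mem_support_iff] using h')) hxy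
  exact hne (by simp [hx, hy])

theorem support_prod {n : ℕ} {ι : Type*} [DecidableEq ι] (s : Finset ι)
    (p : ι → MvPolynomial (Fin n) ℚ)
    (b : ι → Mon n) (h : ∀ i ∈ s, ∀ e ∈ (p i).support, e ≤ b i) :
    ∀ e ∈ (∏ i ∈ s, p i).support, e ≤ ∑ i ∈ s, b i := by
  induction s using Finset.induction with
  | empty =>
    intro e he
    simp only [Finset.prod_empty, MvPolynomial.mem_support_iff, MvPolynomial.coeff_one,
      ne_eq, ite_eq_right_iff, not_forall] at he
    simp [he.1.symm]
  | insert c s' hni ih =>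
    intro e he
    rw [Finset.prod_insert hni, MvPolynomial.mem_support_iff, coeff_mul] at he
    obtain ⟨⟨x, y⟩, hxy, hne⟩ := Finset.exists_ne_zero_of_sum_ne_zero he
    rw [Finset.HasAntidiagonal.mem_antidiagonal] at hxy
    have hx : x ≤ b c := h c (Finset.mem_insert_self _ _) x
      (by simpa [MvPolynomial.mem_support_iff] using left_ne_zero_of_mul hne)
    have hy : y ≤ ∑ i ∈ s', b i := ih (fun i hi => h i (Finset.mem_insert_of_mem hi)) y
      (by simpa [MvPolynomial.mem_support_iff] using right_ne_zero_of_mul hne)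
    rw [Finset.sum_insert hni, ← hxy]
    exact add_le_add hx hy

theorem coeff_top_prod {n : ℕ} {ι : Type*} [DecidableEq ι] (s : Finset ι)
    (p : ι → MvPolynomial (Fin n) ℚ)
    (b : ι → Mon n) (h : ∀ i ∈ s, ∀ e ∈ (p i).support, e ≤ b i) :
    coeff (∑ i ∈ s, b i) (∏ i ∈ s, p i) = ∏ i ∈ s, coeff (b i) (p i) := by
  induction s using Finset.induction with
  | empty => simp
  | insert c s' hni ih =>
    rw [Finset.prod_insert hni, Finset.prod_insert hni, Finset.sum_insert hni,
      coeff_top_mul (h c (Finset.mem_insert_self _ _))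
        (support_prod s' p b (fun i hi => h i (Finset.mem_insert_of_mem hi))),
      ih (fun i hi => h i (Finset.mem_insert_of_mem hi))]

theorem toExp_apply {n k : ℕ} (w : Fin n → Fin k) (i : Fin n) : toExp w i = (w i : ℕ) := by
  simp [toExp]

theorem Pm_support {n : ℕ} (m : Mon n) : ∀ e ∈ (Pm m).support, e ≤ m := by
  have := support_prod Finset.univ (fun i => Qp i (m i)) (fun i => Finsupp.single i (m i))
    (fun i _ => (Qp_support i (m i)).1)
  rwa [Finsupp.univ_sum_single m] at this

theorem Pm_coeff_top {n : ℕ} (m : Mon n) : coeff m (Pm m) = 1 := by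
  have := coeff_top_prod Finset.univ (fun i => Qp i (m i)) (fun i => Finsupp.single i (m i))
    (fun i _ => (Qp_support i (m i)).1)
  rw [Finsupp.univ_sum_single m] at this
  rw [Pm, this]
  exact Finset.prod_eq_one (fun i _ => (Qp_support i (m i)).2)

theorem Pm_eval {n k : ℕ} (m : Mon n) (u : Fin n → Fin k) :
    eval (toField ℚ u) (Pm m) = ∏ i, ∏ j ∈ Finset.range (m i), (((u i : ℕ) : ℚ) - j) := by
  simp [Pm, Qp, toField]

theorem Pm_eval_eq_zero {n k : ℕ} (m : Mon n) (u : Fin n → Fin k) (i : Fin n)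
    (h : (u i : ℕ) < m i) : eval (toField ℚ u) (Pm m) = 0 := by
  rw [Pm_eval]
  refine Finset.prod_eq_zero (Finset.mem_univ i) ?_
  refine Finset.prod_eq_zero (Finset.mem_range.mpr h) ?_
  simp

theorem Pm_eval_ne_zero {n k : ℕ} (m : Mon n) (u : Fin n → Fin k)
    (h : ∀ i, m i ≤ (u i : ℕ)) : eval (toField ℚ u) (Pm m) ≠ 0 := by
  rw [Pm_eval]
  rw [Finset.prod_ne_zero_iff]
  intro i _
  rw [Finset.prod_ne_zero_iff]
  intro j hj
  rw [Finset.mem_range] at hj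
  have : (j : ℕ) ≠ (u i : ℕ) := by have := h i; omega
  intro hc
  rw [sub_eq_zero] at hc
  exact this (by exact_mod_cast hc.symm)

/-- Every polynomial supported in a divisor-closed finset `S` is a linear
combination of the `Pm e`, `e ∈ S`. -/
theorem exists_expansion {n : ℕ} (S : Finset (Mon n))
    (hS : ∀ e ∈ S, ∀ e' : Mon n, e' ≤ e → e' ∈ S) :
    ∀ g : MvPolynomial (Fin n) ℚ, g.support ⊆ S →
      ∃ d : Mon n → ℚ, g = ∑ e ∈ S, C (d e) * Pm e := by
  classical
  induction S using Finset.strongInduction with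
  | _ S ih =>
  intro g hg
  rcases S.eq_empty_or_nonempty with rfl | hne
  · refine ⟨0, ?_⟩
    have : g = 0 := by
      rwa [Finset.subset_empty, MvPolynomial.support_eq_empty] at hg
    simp [this]
  obtain ⟨μ, hμS, hμmax⟩ := S.exists_maximal hne
  set S' := S.erase μ with hS'
  have hsub : S' ⊂ S := Finset.erase_ssubset hμS
  have hS'c : ∀ e ∈ S', ∀ e' : Mon n, e' ≤ e → e' ∈ S' := by
    intro e he e' he'
    have heS := Finset.mem_of_mem_erase he
    have he'S := hS e heS e' he'
    rw [Finset.mem_erase]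
    refine ⟨?_, he'S⟩
    rintro rfl
    exact absurd (hμmax heS he') (not_le_of_gt (lt_of_le_of_ne he' (Finset.ne_of_mem_erase he).symm))
  set g' := g - C (coeff μ g) * Pm μ with hg'
  have hg's : g'.support ⊆ S' := by
    intro e he
    rw [MvPolynomial.mem_support_iff] at he
    have hcoe : coeff e g' = coeff e g - coeff μ g * coeff e (Pm μ) := by
      simp [hg', MvPolynomial.coeff_sub, MvPolynomial.coeff_C_mul]
    rw [Finset.mem_erase]
    constructor
    · rintro rfl
      rw [hcoe, Pm_coeff_top] at he
      simp at he
    · rcases eq_or_ne (coeff e g) 0 with h1 | h1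
      · have h2 : coeff e (Pm μ) ≠ 0 := by
          intro h; rw [hcoe, h1, h] at he; simp at he
        exact hS μ hμS e (Pm_support μ e (MvPolynomial.mem_support_iff.mpr h2))
      · exact hg (MvPolynomial.mem_support_iff.mpr h1)
  obtain ⟨d', hd'⟩ := ih S' hsub hS'c g' hg's
  refine ⟨fun e => if e = μ then coeff μ g else d' e, ?_⟩
  have : S = insert μ S' := by
    rw [hS', Finset.insert_erase hμS]
  rw [this, Finset.sum_insert (Finset.notMem_erase μ S)]
  simp only [eq_self_iff_true, if_true]
  have hsum : ∑ e ∈ S', C (if e = μ then coeff μ g else d' e) * Pm e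
      = ∑ e ∈ S', C (d' e) * Pm e := by
    refine Finset.sum_congr rfl (fun e he => ?_)
    rw [if_neg (Finset.ne_of_mem_erase he)]
  rw [hsum, ← hd', hg']
  ring

theorem lex_isTermOrder {n : ℕ} {σ : Equiv.Perm (Fin n)} {lin : LinearOrder (Mon n)}
    (h : IsLexOrder σ lin) : IsTermOrder lin := by
  have hle : ∀ u v : Mon n, lin.le u v ↔ (u = v ∨ lexLt σ u v) := by
    intro u v
    rw [← h u v]
    constructor
    · intro hl
      rcases eq_or_ne u v with rfl | hne
      · exact Or.inl rfl
      · exact Or.inr ((@lt_iff_le_not_ge _ lin.toPartialOrder.toPreorder u v).mpr ⟨hl,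
          fun hvu => hne (lin.le_antisymm _ _ hl hvu)⟩)
    · rintro (rfl | hlt)
      · exact lin.le_refl u
      · exact (@le_of_lt _ lin.toPartialOrder.toPreorder _ _ hlt)
  constructor
  · intro u
    rcases eq_or_ne u 0 with rfl | hne
    · exact lin.le_refl 0
    · rw [hle]
      right
      have hex : ∃ j : Fin n, u (σ j) ≠ 0 := by
        obtain ⟨i, hi⟩ : ∃ i, u i ≠ 0 := by
          by_contra hc
          push_neg at hc
          exact hne (Finsupp.ext hc)
        exact ⟨σ.symm i, by simpa using hi⟩
      classical
      obtain ⟨j, hj, hjmin⟩ := Finset.exists_minimal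
        (s := Finset.univ.filter fun j => u (σ j) ≠ 0) ⟨hex.choose, by simp [hex.choose_spec]⟩
      simp only [Finset.mem_filter, Finset.mem_univ, true_and] at hj hjmin
      refine ⟨j, by simpa using Nat.pos_of_ne_zero hj, fun i hi => ?_⟩
      by_contra hc
      exact absurd (hjmin (by simpa [eq_comm] using hc) hi.le) (not_le_of_gt hi)
  · intro u v w huv
    rw [hle] at huv ⊢
    rcases huv with rfl | hlt
    · exact Or.inl rfl
    · obtain ⟨j, hj, hjmin⟩ := hlt
      exact Or.inr ⟨j, by simpa using hj, fun i hi => by simp [hjmin i hi]⟩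

theorem le_of_dvd_termOrder {n : ℕ} {lin : LinearOrder (Mon n)} (h : IsTermOrder lin)
    {u v : Mon n} (huv : u ≤ v) : lin.le u v := by
  obtain ⟨c, rfl⟩ := exists_add_of_le huv
  have := h.2 0 c u (h.1 c)
  rwa [zero_add, add_comm] at this

theorem exists_lin_max {α : Type*} (lin : LinearOrder α) (s : Finset α)
    (h : s.Nonempty) : ∃ a ∈ s, ∀ b ∈ s, lin.le b a := by
  letI := lin
  exact s.exists_max_image id h

theorem mem_vanishIdeal {n : ℕ} {F : Type*} [CommRing F] {V : Set (Fin n → F)}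
    {f : MvPolynomial (Fin n) F} :
    f ∈ vanishIdeal V ↔ ∀ v ∈ V, MvPolynomial.eval v f = 0 := Iff.rfl

theorem toExp_inj {n k : ℕ} {w u : Fin n → Fin k} (h : toExp w = toExp u) : w = u := by
  funext i
  have := DFunLike.congr_fun h i
  rw [toExp_apply, toExp_apply] at this
  exact Fin.ext this

section MainAux
variable {n k : ℕ} (V : Finset (Fin n → Fin k))
  (hdown : ∀ v ∈ V, ∀ w : Fin n → Fin k, (∀ i : Fin n, w i ≤ v i) → w ∈ V)

include hdown in
theorem Pm_mem_bad (m : Mon n) (hm : ∀ w ∈ V, toExp w ≠ m) :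
    Pm m ∈ vanishIdeal (n := n) (F := ℚ) ↑(V.image (toField ℚ)) := by
  rw [mem_vanishIdeal]
  intro v hv
  simp only [Finset.coe_image, Set.mem_image, Finset.mem_coe] at hv
  obtain ⟨u, hu, rfl⟩ := hv
  by_cases hc : ∃ i, (u i : ℕ) < m i
  · obtain ⟨i, hi⟩ := hc
    exact Pm_eval_eq_zero m u i hi
  · push_neg at hc
    exfalso
    have hk : ∀ i, m i < k := fun i => lt_of_le_of_lt (hc i) (u i).isLt
    set w : Fin n → Fin k := fun i => ⟨m i, hk i⟩ with hw
    have hwV : w ∈ V := hdown u hu w (fun i => by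
      simp only [hw]
      exact Fin.mk_le_of_le_val (hc i))
    refine hm w hwV ?_
    ext i
    rw [toExp_apply]

include hdown in
theorem stdMon_eq (lin : LinearOrder (Mon n)) (hterm : IsTermOrder lin) :
    stdMon lin (vanishIdeal (n := n) (F := ℚ) ↑(V.image (toField ℚ)))
      = ↑(V.image toExp) := by
  classical
  ext m
  simp only [stdMon, Set.mem_setOf_eq, Finset.mem_coe, Finset.mem_image]
  constructor
  · -- m standard ⇒ m ∈ E ; contrapositive
    intro hstd
    by_contra hnE
    push_neg at hnE
    refine hstd ⟨Pm m, Pm_mem_bad V hdown m hnE, ?_, ?_, ?_⟩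
    · intro h0
      have := Pm_coeff_top m
      rw [h0] at this
      simp at this
    · rw [MvPolynomial.mem_support_iff, Pm_coeff_top]; exact one_ne_zero
    · exact fun m' hm' => le_of_dvd_termOrder hterm (Pm_support m m' hm')
  · -- m ∈ E ⇒ m standard
    rintro ⟨w₀, hw₀V, rfl⟩
    set m := toExp w₀ with hm
    rintro ⟨f, hfI, hf0, hmsupp, hlead⟩
    set B := f.support.sup id with hB
    have hsupp : f.support ⊆ Finset.Iic B := fun e he =>
      Finset.mem_Iic.mpr (Finset.le_sup (f := id) he)
    have hclosed : ∀ e ∈ Finset.Iic B, ∀ e' : Mon n, e' ≤ e → e' ∈ Finset.Iic B :=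
      fun e he e' he' => Finset.mem_Iic.mpr (le_trans he' (Finset.mem_Iic.mp he))
    obtain ⟨d₀, hd₀⟩ := exists_expansion (Finset.Iic B) hclosed f hsupp
    set d : Mon n → ℚ := fun e => if e ∈ Finset.Iic B then d₀ e else 0 with hddef
    have hd : f = ∑ e ∈ Finset.Iic B, C (d e) * Pm e := by
      rw [hd₀]
      refine Finset.sum_congr rfl (fun e he => ?_)
      rw [Finset.mem_Iic] at he
      simp [hddef, he]
    have hdout : ∀ e : Mon n, e ∉ Finset.Iic B → d e = 0 := fun e he => by
      rw [Finset.mem_Iic] at he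
      simp [hddef, he]
    -- Claim: d vanishes on all exponent vectors of points of V
    have zeroE : ∀ w ∈ V, d (toExp w) = 0 := by
      by_contra hc
      push_neg at hc
      set E' : Mon n → Prop := fun e => ∃ w ∈ V, toExp w = e with hE'
      set g := ∑ e ∈ (Finset.Iic B).filter (fun e => E' e), C (d e) * Pm e with hg
      have hgI : g ∈ vanishIdeal (n := n) (F := ℚ) ↑(V.image (toField ℚ)) := by
        have hgf : g = f - ∑ e ∈ (Finset.Iic B).filter (fun e => ¬ E' e),
            C (d e) * Pm e := by
          rw [hd, ← Finset.sum_filter_add_sum_filter_not (Finset.Iic B) E']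
          ring
        rw [hgf]
        refine Ideal.sub_mem _ hfI (Ideal.sum_mem _ (fun e he => ?_))
        rw [Finset.mem_filter] at he
        refine Ideal.mul_mem_left _ _ (Pm_mem_bad V hdown e ?_)
        intro w hw hwe
        exact he.2 ⟨w, hw, hwe⟩
      set T := V.filter (fun w => d (toExp w) ≠ 0) with hT
      have hTne : T.Nonempty := by
        obtain ⟨w, hwV, hdw⟩ := hc
        exact ⟨w, Finset.mem_filter.mpr ⟨hwV, hdw⟩⟩
      obtain ⟨u, huT, humin⟩ := T.exists_minimal hTne
      rw [Finset.mem_filter] at huT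
      have hevg : eval (toField ℚ u) g = 0 := by
        refine hgI (toField ℚ u) ?_
        simp only [Finset.coe_image, Set.mem_image, Finset.mem_coe]
        exact ⟨u, huT.1, rfl⟩
      rw [hg, map_sum] at hevg
      have huB : toExp u ∈ Finset.Iic B := by
        by_contra hnB
        exact huT.2 (hdout _ hnB)
      have hsingle : ∑ e ∈ (Finset.Iic B).filter (fun e => E' e),
          eval (toField ℚ u) (C (d e) * Pm e)
          = eval (toField ℚ u) (C (d (toExp u)) * Pm (toExp u)) := by
        refine Finset.sum_eq_single_of_mem (toExp u)
          (Finset.mem_filter.mpr ⟨huB, ⟨u, huT.1, rfl⟩⟩) ?_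
        intro e he hne
        rw [Finset.mem_filter] at he
        obtain ⟨w, hwV, rfl⟩ := he.2
        rw [eval_mul, eval_C]
        rcases eq_or_ne (d (toExp w)) 0 with h | h
        · rw [h]; ring
        rcases eq_or_ne (eval (toField ℚ u) (Pm (toExp w))) 0 with h2 | h2
        · rw [h2]; ring
        exfalso
        have hle : ∀ i, (w i : ℕ) ≤ (u i : ℕ) := by
          intro i
          by_contra hlt
          push_neg at hlt
          rw [← toExp_apply w i] at hlt
          exact h2 (Pm_eval_eq_zero _ u i hlt)
        have hwu : w < u := by
          refine lt_of_le_of_ne (fun i => Fin.mk_le_of_le_val (hle i)) ?_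
          intro heq
          exact hne (by rw [heq])
        exact absurd (humin (Finset.mem_filter.mpr ⟨hwV, h⟩) hwu.le) (not_le_of_gt hwu)
      rw [hsingle, eval_mul, eval_C] at hevg
      rcases mul_eq_zero.mp hevg with h | h
      · exact huT.2 h
      · exact Pm_eval_ne_zero (toExp u) u (fun i => by rw [toExp_apply]) h
    -- Now show d m ≠ 0, contradiction
    have hmB : m ∈ Finset.Iic B := hsupp hmsupp
    set D := (Finset.Iic B).filter (fun e => d e ≠ 0) with hD
    have hDne : D.Nonempty := by
      by_contra hDe
      rw [Finset.not_nonempty_iff_eq_empty] at hDe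
      refine hf0 ?_
      rw [hd]
      refine Finset.sum_eq_zero (fun e he => ?_)
      have : d e = 0 := by
        by_contra h
        have : e ∈ D := Finset.mem_filter.mpr ⟨he, h⟩
        rw [hDe] at this
        exact absurd this (Finset.notMem_empty e)
      rw [this]; simp
    obtain ⟨μ, hμD, hμmax⟩ := exists_lin_max lin D hDne
    rw [Finset.mem_filter] at hμD
    have hcoeffμ : coeff μ f = d μ := by
      rw [hd, MvPolynomial.coeff_sum]
      have : ∑ e ∈ Finset.Iic B, coeff μ (C (d e) * Pm e)
          = coeff μ (C (d μ) * Pm μ) := by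
        refine Finset.sum_eq_single_of_mem μ hμD.1 ?_
        intro e he hne
        rw [MvPolynomial.coeff_C_mul]
        rcases eq_or_ne (d e) 0 with h | h
        · rw [h]; ring
        rcases eq_or_ne (coeff μ (Pm e)) 0 with h2 | h2
        · rw [h2]; ring
        exfalso
        have h3 : μ ≤ e := Pm_support e μ (MvPolynomial.mem_support_iff.mpr h2)
        have h4 : lin.le μ e := le_of_dvd_termOrder hterm h3
        have h5 : lin.le e μ := hμmax e (Finset.mem_filter.mpr ⟨he, h⟩)
        exact hne (lin.le_antisymm _ _ h5 h4)
      rw [this, MvPolynomial.coeff_C_mul, Pm_coeff_top, mul_one]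
    have hμsupp : μ ∈ f.support := by
      rw [MvPolynomial.mem_support_iff, hcoeffμ]
      exact hμD.2
    have hlin1 : lin.le μ m := hlead μ hμsupp
    have hlin2 : lin.le m μ := by
      have hmf : coeff m f ≠ 0 := MvPolynomial.mem_support_iff.mp hmsupp
      rw [hd, MvPolynomial.coeff_sum] at hmf
      obtain ⟨e, he, hne⟩ := Finset.exists_ne_zero_of_sum_ne_zero hmf
      rw [MvPolynomial.coeff_C_mul] at hne
      have h1 : d e ≠ 0 := left_ne_zero_of_mul hne
      have h2 : coeff m (Pm e) ≠ 0 := right_ne_zero_of_mul hne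
      have h3 : m ≤ e := Pm_support e m (MvPolynomial.mem_support_iff.mpr h2)
      exact lin.le_trans _ _ _ (le_of_dvd_termOrder hterm h3)
        (hμmax e (Finset.mem_filter.mpr ⟨he, h1⟩))
    have hμm : μ = m := lin.le_antisymm _ _ hlin1 hlin2
    have : d m ≠ 0 := hμm ▸ hμD.2
    exact this (zeroE w₀ hw₀V)

end MainAux
end Aux

/-- If a finite point set `𝒱 ⊆ {0,…,k-1}^n` is a down-set then `Dᵢ(𝒱) = 𝒱` for every `i`;
consequently every finite down-set is extremal. -/
theorem downSet_downshift_fixed_and_extremal {n k : ℕ} (V : Finset (Fin n → Fin k))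
    (hdown : ∀ v ∈ V, ∀ w : Fin n → Fin k, (∀ i : Fin n, w i ≤ v i) → w ∈ V) :
    (∀ i : Fin n, downshift V i = V) ∧
    IsExtremal ((V.image (toField ℚ) : Finset (Fin n → ℚ)) : Set (Fin n → ℚ)) := by
  constructor
  · intro i
    ext w
    simp only [downshift, Finset.mem_filter, Finset.mem_univ, true_and]
    set S := Finset.univ.filter fun α : Fin k => Function.update w i α ∈ V with hS
    have hdc : ∀ α ∈ S, ∀ β : Fin k, β ≤ α → β ∈ S := by
      intro α hα β hβ
      simp only [hS, Finset.mem_filter, Finset.mem_univ, true_and] at hα ⊢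
      refine hdown _ hα _ (fun j => ?_)
      rcases eq_or_ne j i with rfl | hj
      · simpa using hβ
      · simp [Function.update_of_ne hj]
    constructor
    · intro hlt
      have hwS : w i ∈ S := by
        by_contra hni
        have hsub : S ⊆ Finset.Iio (w i) := by
          intro α hα
          simp only [Finset.mem_Iio]
          by_contra hle
          exact hni (hdc α hα (w i) (le_of_not_gt hle))
        have := Finset.card_le_card hsub
        rw [Fin.card_Iio] at this
        omega
      simp only [hS, Finset.mem_filter, Finset.mem_univ, true_and,
        Function.update_eq_self] at hwS
      exact hwS
    · intro hw
      have hsub : Finset.Iic (w i) ⊆ S := by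
        intro β hβ
        simp only [Finset.mem_Iic] at hβ
        refine hdc (w i) ?_ β hβ
        simp [hS, Function.update_eq_self, hw]
      have := Finset.card_le_card hsub
      rw [Fin.card_Iic] at this
      omega
  · intro σ₁ σ₂ lin₁ lin₂ h₁ h₂
    rw [stdMon_eq V hdown lin₁ (lex_isTermOrder h₁),
      stdMon_eq V hdown lin₂ (lex_isTermOrder h₂)]
end

section
/- Let 𝔽 and 𝔽̂ be fields, A ⊆ 𝔽 a finite set, 𝒱 ⊆ A^n a finite point set, and φ_1,…,φ_n : A → 𝔽̂ injective functions. Let 𝒱̂ = {(φ_1(v_1),…,φ_n(v_n)) : (v_1,…,v_n) ∈ 𝒱}. Then for any ordering of the variables, the standard monomials of I(𝒱) ⊴ 𝔽[x_1,…,x_n] with respect to the induced lexicographic order coincide with the standard monomials of I(𝒱̂) ⊴ 𝔽̂[x_1,…,x_n] with respect to the same lexicographic order. -/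
open MvPolynomial

section SmAux

open Finsupp MvPolynomial
open scoped Classical

variable {n : ℕ}

lemma lexLt_one_iff {u v : Mon n} : lexLt 1 u v ↔ toLex u < toLex v := by
  rw [show (toLex u < toLex v) = Finsupp.Lex (· < ·) (· < ·) u v from rfl, Finsupp.lex_def]
  simp only [lexLt, Equiv.Perm.coe_one, id_eq]
  exact ⟨fun ⟨j, h1, h2⟩ => ⟨j, h2, h1⟩, fun ⟨j, h1, h2⟩ => ⟨j, h2, h1⟩⟩

lemma exists_lex_max (s : Finset (Mon n)) (hs : s.Nonempty) :
    ∃ m ∈ s, ∀ m' ∈ s, m' = m ∨ lexLt 1 m' m := by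
  obtain ⟨m, hm, hmax⟩ := s.exists_max_image (fun u => toLex u) hs
  refine ⟨m, hm, fun m' hm' => ?_⟩
  rcases eq_or_lt_of_le (hmax m' hm') with h | h
  · exact Or.inl (toLex.injective h)
  · exact Or.inr (lexLt_one_iff.mpr h)

/-- Leading-monomial predicate phrased via `lexLt`. -/
def LM {F : Type*} [CommSemiring F] (σ : Equiv.Perm (Fin n)) (f : MvPolynomial (Fin n) F)
    (m : Mon n) : Prop :=
  m ∈ f.support ∧ ∀ m' ∈ f.support, m' = m ∨ lexLt σ m' m

/-- Standard monomials phrased via `LM`. -/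
def SMon {F : Type*} [CommRing F] (σ : Equiv.Perm (Fin n)) (V : Set (Fin n → F)) :
    Set (Mon n) :=
  { m | ¬ ∃ f ∈ vanishIdeal V, f ≠ 0 ∧ LM σ f m }

lemma isLeadMon_iff_LM {F : Type*} [CommSemiring F] {σ : Equiv.Perm (Fin n)}
    {lin : LinearOrder (Mon n)} (hlin : IsLexOrder σ lin) (f : MvPolynomial (Fin n) F)
    (m : Mon n) : IsLeadMon lin f m ↔ LM σ f m := by
  have hle : ∀ a b : Mon n, lin.le a b ↔ (a = b ∨ lexLt σ a b) := by
    intro a b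
    constructor
    · intro h
      by_cases he : a = b
      · exact Or.inl he
      · refine Or.inr ((hlin a b).mp ?_)
        exact (lin.lt_iff_le_not_ge a b).mpr ⟨h, fun hba => he (lin.le_antisymm a b h hba)⟩
    · rintro (rfl | h)
      · exact lin.le_refl a
      · exact ((lin.lt_iff_le_not_ge a b).mp ((hlin a b).mpr h)).1
  unfold IsLeadMon LM
  exact and_congr_right fun _ => forall₂_congr fun m' _ => hle m' m

lemma stdMon_eq_SMon {F : Type*} [CommRing F] {σ : Equiv.Perm (Fin n)}
    {lin : LinearOrder (Mon n)} (hlin : IsLexOrder σ lin) (V : Set (Fin n → F)) :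
    stdMon lin (vanishIdeal V) = SMon σ V := by
  ext m
  simp only [stdMon, SMon, Set.mem_setOf_eq]
  exact not_congr (exists_congr fun f => and_congr_right fun _ =>
    and_congr_right fun _ => isLeadMon_iff_LM hlin f m)

lemma card_le_of_SMon {F : Type*} [Field F] (V : Finset (Fin n → F)) (s : Finset (Mon n))
    (hs : ∀ m ∈ s, m ∈ SMon 1 (V : Set (Fin n → F))) : s.card ≤ V.card := by
  classical
  have hli : LinearIndependent F
      (fun m : {x // x ∈ s} => (fun v : {x // x ∈ V} =>
        MvPolynomial.eval (v : Fin n → F) (MvPolynomial.monomial (m : Mon n) (1 : F)))) := by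
    rw [Fintype.linearIndependent_iff]
    intro g hg i0
    by_contra hi0
    set f : MvPolynomial (Fin n) F := ∑ m ∈ s.attach, MvPolynomial.monomial (m : Mon n) (g m)
      with hf
    have hcoeff : ∀ m0 : Mon n, MvPolynomial.coeff m0 f =
        ∑ m ∈ s.attach, if (m : Mon n) = m0 then g m else 0 := by
      intro m0
      rw [hf, MvPolynomial.coeff_sum]
      exact Finset.sum_congr rfl fun m _ => MvPolynomial.coeff_monomial _ _ _
    have hcs : ∀ m0 : {x // x ∈ s}, MvPolynomial.coeff (m0 : Mon n) f = g m0 := by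
      intro m0
      rw [hcoeff, Finset.sum_eq_single m0]
      · simp
      · intro b _ hb
        have : (b : Mon n) ≠ (m0 : Mon n) := fun h => hb (Subtype.ext h)
        simp [this]
      · intro h
        exact absurd (Finset.mem_attach _ _) h
    have hsupp : f.support ⊆ s := by
      intro m0 hm0
      by_contra hm0s
      rw [MvPolynomial.mem_support_iff, hcoeff] at hm0
      apply hm0
      apply Finset.sum_eq_zero
      intro m _
      have : (m : Mon n) ≠ m0 := fun h => hm0s (h ▸ m.2)
      simp [this]
    have hfI : f ∈ vanishIdeal (V : Set (Fin n → F)) := by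
      intro v hv
      have hpt := congrFun hg ⟨v, hv⟩
      simp only [Finset.sum_apply, Pi.smul_apply, smul_eq_mul, Pi.zero_apply] at hpt
      rw [hf, map_sum]
      rw [← hpt, Finset.univ_eq_attach]
      refine Finset.sum_congr rfl fun m _ => ?_
      simp [MvPolynomial.eval_monomial]
    have hf0 : f ≠ 0 := fun h => hi0 (by rw [← hcs i0, h, MvPolynomial.coeff_zero])
    obtain ⟨mM, hmM, hmax⟩ := exists_lex_max f.support (MvPolynomial.support_nonempty.mpr hf0)
    exact hs mM (hsupp hmM) ⟨f, hfI, hf0, hmM, hmax⟩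
  have h1 := hli.fintype_card_le_finrank
  simpa [Module.finrank_fintype_fun_eq_card, Fintype.card_coe] using h1

open scoped Classical in
/-- the `j`-th section set of `V`. -/
noncomputable def sect {F : Type*} [Field F] (V : Finset (Fin (n + 1) → F)) (j : ℕ) :
    Finset (Fin n → F) :=
  (V.image Fin.tail).filter fun v' => j < (V.filter fun v => Fin.tail v = v').card

open scoped Classical in
/-- The combinatorial standard monomial set. -/
noncomputable def Comb {F : Type*} [Field F] : (n : ℕ) → Finset (Fin n → F) → Finset (Mon n)
  | 0, V => if V.Nonempty then {0} else ∅
  | n + 1, V =>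
    (Finset.range (V.card + 1)).biUnion fun j =>
      (Comb n (sect V j)).image fun u => u.cons j

lemma cons_mem_SMon {F : Type*} [Field F] {V : Finset (Fin (n + 1) → F)} {j : ℕ} {u : Mon n}
    (hu : u ∈ SMon 1 ((sect V j : Finset (Fin n → F)) : Set (Fin n → F))) :
    u.cons j ∈ SMon 1 (V : Set (Fin (n + 1) → F)) := by
  classical
  rintro ⟨f, hfI, hf0, hmem, hlm⟩
  set p := MvPolynomial.finSuccEquiv F n f with hp
  have hcc : ∀ (m : Mon n) (i : ℕ),
      MvPolynomial.coeff m (p.coeff i) = MvPolynomial.coeff (m.cons i) f := fun m i =>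
    MvPolynomial.finSuccEquiv_coeff_coeff m f i
  have hufj : u ∈ (p.coeff j).support := by
    rw [MvPolynomial.mem_support_iff, hcc]
    exact MvPolynomial.mem_support_iff.mp hmem
  have hdeg : p.natDegree ≤ j := by
    rw [Polynomial.natDegree_le_iff_coeff_eq_zero]
    intro d hd
    by_contra hpd
    obtain ⟨m, hm⟩ := MvPolynomial.ne_zero_iff.mp hpd
    have hmf : (m.cons d) ∈ f.support := by
      rw [MvPolynomial.mem_support_iff, ← hcc]; exact hm
    rcases hlm _ hmf with heq | hlt
    · have h0 := DFunLike.congr_fun heq (0 : Fin (n + 1))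
      rw [Finsupp.cons_zero, Finsupp.cons_zero] at h0
      omega
    · obtain ⟨j', hj'lt, hj'pre⟩ := hlt
      induction j' using Fin.cases with
      | zero =>
        simp only [Equiv.Perm.coe_one, id_eq, Finsupp.cons_zero] at hj'lt
        omega
      | succ i =>
        have h0 := hj'pre 0 (Fin.succ_pos i)
        simp only [Equiv.Perm.coe_one, id_eq, Finsupp.cons_zero] at h0
        omega
  have hfjI : p.coeff j ∈ vanishIdeal ((sect V j : Finset (Fin n → F)) : Set (Fin n → F)) := by
    intro v' hv'
    rw [Finset.mem_coe] at hv'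
    simp only [sect, Finset.mem_filter, Finset.mem_image] at hv'
    obtain ⟨hv'im, hv'card⟩ := hv'
    set q := p.map (MvPolynomial.eval v') with hq
    have hq0 : q = 0 := by
      apply Polynomial.eq_zero_of_natDegree_lt_card_of_eval_eq_zero' q
        ((V.filter fun v => Fin.tail v = v').image fun v => v 0)
      · intro a ha
        simp only [Finset.mem_image, Finset.mem_filter] at ha
        obtain ⟨v, ⟨hvV, hvt⟩, rfl⟩ := ha
        rw [hq, hp, ← MvPolynomial.eval_eq_eval_mv_eval']
        have hcv : (Fin.cons (v 0) v' : Fin (n + 1) → F) = v := by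
          rw [← hvt]; exact Fin.cons_self_tail v
        rw [hcv]
        exact hfI v (Finset.mem_coe.mpr hvV)
      · have hcard : ((V.filter fun v => Fin.tail v = v').image fun v => v 0).card
            = (V.filter fun v => Fin.tail v = v').card := by
          apply Finset.card_image_of_injOn
          intro a ha b hb hab
          rw [Finset.mem_coe, Finset.mem_filter] at ha hb
          have hab' : a 0 = b 0 := hab
          calc a = Fin.cons (a 0) (Fin.tail a) := (Fin.cons_self_tail a).symm
          _ = Fin.cons (b 0) (Fin.tail b) := by rw [hab', ha.2, hb.2]
          _ = b := Fin.cons_self_tail b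
        calc q.natDegree ≤ p.natDegree := Polynomial.natDegree_map_le
        _ ≤ j := hdeg
        _ < _ := by rw [hcard]; exact hv'card
    have hqc : MvPolynomial.eval v' (p.coeff j) = q.coeff j := by
      rw [hq, Polynomial.coeff_map]
    rw [hqc, hq0, Polynomial.coeff_zero]
  have hfj0 : p.coeff j ≠ 0 := fun h => by
    rw [h] at hufj; simp at hufj
  apply hu
  refine ⟨p.coeff j, hfjI, hfj0, hufj, ?_⟩
  intro m' hm'
  have hmf : (m'.cons j) ∈ f.support := by
    rw [MvPolynomial.mem_support_iff, ← hcc]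
    exact MvPolynomial.mem_support_iff.mp hm'
  rcases hlm _ hmf with heq | hlt
  · exact Or.inl (Finsupp.cons_right_injective j heq)
  · right
    obtain ⟨j', hj'lt, hj'pre⟩ := hlt
    induction j' using Fin.cases with
    | zero =>
      exfalso
      simp only [Equiv.Perm.coe_one, id_eq, Finsupp.cons_zero] at hj'lt
      omega
    | succ i =>
      refine ⟨i, ?_, ?_⟩
      · simpa only [Equiv.Perm.coe_one, id_eq, Finsupp.cons_succ] using hj'lt
      · intro i' hi'
        have := hj'pre i'.succ (Fin.succ_lt_succ_iff.mpr hi')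
        simpa only [Equiv.Perm.coe_one, id_eq, Finsupp.cons_succ] using this

lemma SMon_zero_nonempty {F : Type*} [Field F] {V : Finset (Fin 0 → F)} (hV : V.Nonempty)
    (m : Mon 0) : m ∈ SMon 1 (V : Set (Fin 0 → F)) := by
  rintro ⟨f, hfI, hf0, -⟩
  obtain ⟨v, hv⟩ := hV
  obtain ⟨c, rfl⟩ := MvPolynomial.C_surjective (Fin 0) f
  have hc := hfI v (Finset.mem_coe.mpr hv)
  rw [MvPolynomial.eval_C] at hc
  exact hf0 (by rw [hc, map_zero])

lemma Comb_subset_SMon {F : Type*} [Field F] :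
    ∀ (n : ℕ) (V : Finset (Fin n → F)) (m : Mon n),
      m ∈ Comb n V → m ∈ SMon 1 (V : Set (Fin n → F))
  | 0, V, m, hm => by
    by_cases h : V.Nonempty
    · exact SMon_zero_nonempty h m
    · simp only [Comb, if_neg h, Finset.notMem_empty] at hm
  | n + 1, V, m, hm => by
    simp only [Comb, Finset.mem_biUnion, Finset.mem_image, Finset.mem_range] at hm
    obtain ⟨j, hj, u, hu, rfl⟩ := hm
    exact cons_mem_SMon (Comb_subset_SMon n (sect V j) u hu)

lemma card_Comb {F : Type*} [Field F] :
    ∀ (n : ℕ) (V : Finset (Fin n → F)), (Comb n V).card = V.card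
  | 0, V => by
    classical
    by_cases h : V.Nonempty
    · have h1 : V.card ≤ 1 := Finset.card_le_one.mpr fun a _ b _ => Subsingleton.elim a b
      have h2 : 1 ≤ V.card := Finset.Nonempty.card_pos h
      simp only [Comb, if_pos h, Finset.card_singleton]
      omega
    · rw [Finset.not_nonempty_iff_eq_empty] at h
      subst h
      simp [Comb]
  | n + 1, V => by
    classical
    simp only [Comb]
    rw [Finset.card_biUnion]
    · have himg : ∀ j ∈ Finset.range (V.card + 1),
          ((Comb n (sect V j)).image fun u => u.cons j).card = (sect V j).card := by
        intro j _
        rw [Finset.card_image_of_injective _ (Finsupp.cons_right_injective j), card_Comb n]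
      rw [Finset.sum_congr rfl himg]
      have hsec : ∀ j ∈ Finset.range (V.card + 1), (sect V j).card =
          ∑ v' ∈ V.image Fin.tail,
            if j < (V.filter fun v => Fin.tail v = v').card then 1 else 0 := by
        intro j _
        rw [sect, Finset.card_filter]
      rw [Finset.sum_congr rfl hsec, Finset.sum_comm]
      have hfib : V.card = ∑ v' ∈ V.image Fin.tail,
          (V.filter fun v => Fin.tail v = v').card :=
        Finset.card_eq_sum_card_fiberwise fun v hv => Finset.mem_image_of_mem _ hv
      conv_rhs => rw [hfib]
      refine Finset.sum_congr rfl fun v' hv' => ?_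
      have hle : (V.filter fun v => Fin.tail v = v').card ≤ V.card := Finset.card_filter_le _ _
      rw [← Finset.card_filter]
      have hrg : (Finset.range (V.card + 1)).filter
          (fun j => j < (V.filter fun v => Fin.tail v = v').card)
          = Finset.range ((V.filter fun v => Fin.tail v = v').card) := by
        ext x
        simp only [Finset.mem_filter, Finset.mem_range]
        omega
      rw [hrg, Finset.card_range]
    · intro a _ b _ hab
      simp only [Finset.disjoint_left, Finset.mem_image]
      rintro m ⟨u, hu, rfl⟩ ⟨w, hw, hcw⟩
      have h0 := DFunLike.congr_fun hcw (0 : Fin (n + 1))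
      rw [Finsupp.cons_zero, Finsupp.cons_zero] at h0
      exact hab h0.symm

lemma Comb_image {F F' : Type*} [Field F] [Field F'] :
    ∀ (n : ℕ) (V : Finset (Fin n → F)) (φ : Fin n → F → F'),
      (∀ v ∈ V, ∀ w ∈ V, ∀ i, φ i (v i) = φ i (w i) → v i = w i) →
      Comb n (V.image fun v i => φ i (v i)) = Comb n V
  | 0, V, φ, _ => by
    classical
    simp only [Comb, Finset.image_nonempty]
  | n + 1, V, φ, hφ => by
    classical
    have hinj : Set.InjOn (fun v (i : Fin (n + 1)) => φ i (v i)) (V : Set (Fin (n + 1) → F)) := by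
      intro v hv w hw h
      funext i
      exact hφ v hv w hw i (congrFun h i)
    have hcard : (V.image fun v i => φ i (v i)).card = V.card :=
      Finset.card_image_of_injOn hinj
    have hsect : ∀ j, sect (V.image fun v i => φ i (v i)) j
        = (sect V j).image fun v' i => φ i.succ (v' i) := by
      intro j
      have htail : (V.image fun v i => φ i (v i)).image Fin.tail
          = (V.image Fin.tail).image fun v' (i : Fin n) => φ i.succ (v' i) := by
        rw [Finset.image_image, Finset.image_image]
        rfl
      have hsc : ∀ v' ∈ V.image Fin.tail,
          ((V.image fun v i => φ i (v i)).filter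
            (fun w => Fin.tail w = fun i => φ i.succ (v' i))).card
            = (V.filter fun v => Fin.tail v = v').card := by
        intro v' hv'
        obtain ⟨w0, hw0, rfl⟩ := Finset.mem_image.mp hv'
        rw [Finset.filter_image,
          Finset.card_image_of_injOn (hinj.mono (by exact_mod_cast Finset.filter_subset _ V))]
        congr 1
        apply Finset.filter_congr
        intro v hv
        constructor
        · intro h
          funext i
          exact hφ v hv w0 hw0 i.succ (congrFun h i)
        · intro h
          funext i
          exact congrArg (φ i.succ) (congrFun h i)
      rw [sect, sect, htail, Finset.filter_image]
      apply congrArg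
      apply Finset.filter_congr
      intro v' hv'
      rw [hsc v' hv']
    simp only [Comb]
    rw [hcard]
    apply Finset.biUnion_congr rfl
    intro j _
    rw [hsect j, Comb_image n (sect V j) (fun i => φ i.succ) ?_]
    intro v' hv' w' hw' i h
    have hv'' : v' ∈ V.image Fin.tail := by
      simp only [sect, Finset.mem_filter] at hv'
      exact hv'.1
    have hw'' : w' ∈ V.image Fin.tail := by
      simp only [sect, Finset.mem_filter] at hw'
      exact hw'.1
    obtain ⟨a, ha, rfl⟩ := Finset.mem_image.mp hv''
    obtain ⟨b, hb, rfl⟩ := Finset.mem_image.mp hw''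
    exact hφ a ha b hb i.succ h

lemma SMon_eq_Comb {F : Type*} [Field F] (n : ℕ) (V : Finset (Fin n → F)) :
    SMon 1 (V : Set (Fin n → F)) = ↑(Comb n V) := by
  classical
  refine Set.Subset.antisymm ?_ fun m hm => Comb_subset_SMon n V m hm
  intro m hm
  by_contra hmC
  have h := card_le_of_SMon V (insert m (Comb n V)) ?_
  · rw [Finset.card_insert_of_notMem (by simpa using hmC), card_Comb] at h
    omega
  · intro m' hm'
    rcases Finset.mem_insert.mp hm' with rfl | h'
    · exact hm
    · exact Comb_subset_SMon n V m' h'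

lemma SMon_perm {F : Type*} [Field F] (σ : Equiv.Perm (Fin n)) (V : Finset (Fin n → F))
    (m : Mon n) :
    m ∈ SMon σ (V : Set (Fin n → F)) ↔
      Finsupp.equivMapDomain σ.symm m ∈
        SMon 1 ((V.image fun v => v ∘ ⇑σ : Finset (Fin n → F)) : Set (Fin n → F)) := by
  classical
  have hE : ∀ (u : Mon n) (i : Fin n), Finsupp.equivMapDomain σ.symm u i = u (σ i) := by
    intro u i
    rw [Finsupp.equivMapDomain_apply, Equiv.symm_symm]
  have hlex : ∀ u v : Mon n, lexLt σ u v ↔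
      lexLt 1 (Finsupp.equivMapDomain σ.symm u) (Finsupp.equivMapDomain σ.symm v) := by
    intro u v
    simp only [lexLt, hE, Equiv.Perm.coe_one, id_eq]
  have hEinj : Function.Injective
      (fun u : Mon n => Finsupp.equivMapDomain σ.symm u) := by
    intro u v h
    ext i
    have hi := DFunLike.congr_fun h (σ.symm i)
    rwa [hE, hE, Equiv.apply_symm_apply] at hi
  have hsupp : ∀ f : MvPolynomial (Fin n) F,
      (MvPolynomial.rename (⇑σ.symm) f).support
        = f.support.image fun u => Finsupp.equivMapDomain σ.symm u := by
    intro f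
    rw [MvPolynomial.support_rename_of_injective σ.symm.injective]
    apply Finset.image_congr
    intro u _
    exact (Finsupp.equivMapDomain_eq_mapDomain _ _).symm
  have hLM : ∀ (f : MvPolynomial (Fin n) F) (m0 : Mon n),
      LM σ f m0 ↔ LM 1 (MvPolynomial.rename (⇑σ.symm) f)
        (Finsupp.equivMapDomain σ.symm m0) := by
    intro f m0
    unfold LM
    rw [hsupp]
    constructor
    · rintro ⟨h1, h2⟩
      refine ⟨Finset.mem_image_of_mem _ h1, ?_⟩
      rintro m' hm'
      obtain ⟨u, hu, rfl⟩ := Finset.mem_image.mp hm'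
      rcases h2 u hu with rfl | hlt
      · exact Or.inl rfl
      · exact Or.inr ((hlex u m0).mp hlt)
    · rintro ⟨h1, h2⟩
      obtain ⟨u, hu, he⟩ := Finset.mem_image.mp h1
      have hum : u = m0 := hEinj he
      subst hum
      refine ⟨hu, ?_⟩
      intro m' hm'
      rcases h2 _ (Finset.mem_image_of_mem _ hm') with heq | hlt
      · exact Or.inl (hEinj heq)
      · exact Or.inr ((hlex m' u).mpr hlt)
  have hid : ∀ g : MvPolynomial (Fin n) F,
      MvPolynomial.rename (⇑σ.symm) (MvPolynomial.rename (⇑σ) g) = g := by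
    intro g
    rw [MvPolynomial.rename_rename,
      show (⇑σ.symm ∘ ⇑σ) = id from funext fun i => σ.symm_apply_apply i,
      MvPolynomial.rename_id, AlgHom.id_apply]
  simp only [SMon, Set.mem_setOf_eq]
  constructor
  · intro hm hnew
    obtain ⟨g, hgI, hg0, hgLM⟩ := hnew
    apply hm
    refine ⟨MvPolynomial.rename (⇑σ) g, ?_, ?_, ?_⟩
    · intro v hv
      rw [MvPolynomial.eval_rename]
      exact hgI (v ∘ ⇑σ)
        (Finset.mem_coe.mpr (Finset.mem_image_of_mem _ (Finset.mem_coe.mp hv)))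
    · intro h
      apply hg0
      rw [← hid g, h, map_zero]
    · rw [hLM, hid]
      exact hgLM
  · intro hm hnew
    obtain ⟨f, hfI, hf0, hfLM⟩ := hnew
    apply hm
    refine ⟨MvPolynomial.rename (⇑σ.symm) f, ?_, ?_, ?_⟩
    · intro w hw
      obtain ⟨v, hv, rfl⟩ := Finset.mem_image.mp (Finset.mem_coe.mp hw)
      rw [MvPolynomial.eval_rename]
      have hvc : (v ∘ ⇑σ) ∘ ⇑σ.symm = v := funext fun i => congrArg v (σ.apply_symm_apply i)
      rw [hvc]
      exact hfI v hv
    · intro h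
      exact hf0 ((MvPolynomial.rename_injective _ σ.symm.injective)
        (by rw [h, map_zero]))
    · exact (hLM f m).mp hfLM

end SmAux

open scoped Classical in
/-- universality of standard monomials.
Let `A ⊆ 𝔽` be finite, `𝒱 ⊆ Aⁿ` finite and `φᵢ : A → 𝔽̂` injective. Then for every
lexicographic order the standard monomials of `I(𝒱) ⊴ 𝔽[x]` coincide with those of
`I(𝒱̂) ⊴ 𝔽̂[x]`, where `𝒱̂` is the image of `𝒱` under `(φ₁,…,φₙ)`. -/
theorem stdMon_universality {n : ℕ} {F F' : Type*} [Field F] [Field F']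
    (A : Finset F) (V : Finset (Fin n → F)) (hV : ∀ v ∈ V, ∀ i : Fin n, v i ∈ A)
    (φ : Fin n → F → F') (hφ : ∀ i : Fin n, Set.InjOn (φ i) (A : Set F))
    (σ : Equiv.Perm (Fin n)) (lin : LinearOrder (Mon n)) (hlin : IsLexOrder σ lin) :
    stdMon lin (vanishIdeal (V : Set (Fin n → F))) =
      stdMon lin (vanishIdeal
        ((V.image (fun v (i : Fin n) => φ i (v i)) : Finset (Fin n → F')) :
          Set (Fin n → F'))) := by
    classical
  rw [stdMon_eq_SMon hlin, stdMon_eq_SMon hlin]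
  ext m
  rw [SMon_perm σ V m, SMon_perm σ _ m]
  have himg : ((V.image fun v (i : Fin n) => φ i (v i)).image fun v => v ∘ ⇑σ)
      = (V.image fun v => v ∘ ⇑σ).image fun w (i : Fin n) => φ (σ i) (w i) := by
    rw [Finset.image_image, Finset.image_image]
    rfl
  rw [himg, SMon_eq_Comb, SMon_eq_Comb,
    Comb_image n (V.image fun v => v ∘ ⇑σ) (fun i => φ (σ i)) ?_]
  intro v' hv' w' hw' i h
  obtain ⟨v, hv, rfl⟩ := Finset.mem_image.mp hv'
  obtain ⟨w, hw, rfl⟩ := Finset.mem_image.mp hw'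
  exact hφ (σ i) (hV v hv (σ i)) (hV w hw (σ i)) h
end
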